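/- arXiv:1401.5124 — 9 statements merged into one kernel-verified Lean document; each statement's English description precedes it below -/
import Mathlib

section
/- Let P ≪ Q be probability distributions on the same measurable space and 0 ≤ α ≤ 1. Then (1/α) · D(αP + (1−α)Q ‖ Q) → 0 as α → 0, where D denotes relative entropy (KL divergence). -/
open MeasureTheory Filter Set

noncomputable def klg (u : ℝ) : ℝ := u * Real.log u - u + 1

lemma klg_nonneg {u : ℝ} (h : 0 ≤ u) : 0 ≤ klg u := by
  rcases eq_or_lt_of_le h with h0 | h0
  · simp [klg, ← h0]
  · have h1 : Real.log u⁻¹ ≤ u⁻¹ - 1 := Real.log_le_sub_one_of_pos (by positivity)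
    rw [Real.log_inv] at h1
    have h2 : 1 - u⁻¹ ≤ Real.log u := by linarith
    have h3 : u * (1 - u⁻¹) ≤ u * Real.log u :=
      mul_le_mul_of_nonneg_left h2 h
    have h4 : u * (1 - u⁻¹) = u - 1 := by field_simp
    simp only [klg]; nlinarith

lemma klg_convexOn : ConvexOn ℝ (Set.Ici 0) klg := by
  have h1 : ConvexOn ℝ (Set.Ici (0:ℝ)) (fun x : ℝ ↦ x * Real.log x) :=
    Real.convexOn_mul_log
  have h2 : ConcaveOn ℝ (Set.Ici (0:ℝ)) (fun x : ℝ ↦ x - 1) :=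
    ((concaveOn_id (convex_Ici 0)).sub (convexOn_const 1 (convex_Ici 0)))
  have h3 := h1.sub h2
  have he : klg = (fun x : ℝ => x * Real.log x) - fun x : ℝ => x - 1 := by
    funext u; simp only [klg, Pi.sub_apply]; ring
  rw [he]; exact h3

lemma klg_chord {a b t : ℝ} (ha : 0 < a) (hab : a ≤ b) (hb : b ≤ 1) (ht : -1 ≤ t) :
    klg (1 + a * t) / a ≤ klg (1 + b * t) / b := by
  have hb0 : 0 < b := lt_of_lt_of_le ha hab
  have hx : (1 : ℝ) + b * t ∈ Set.Ici (0:ℝ) := by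
    simp only [Set.mem_Ici]; nlinarith
  have hy : (1 : ℝ) ∈ Set.Ici (0:ℝ) := by norm_num
  have hw1 : (0:ℝ) ≤ a / b := by positivity
  have hw2 : (0:ℝ) ≤ 1 - a / b := by
    have : a / b ≤ 1 := (div_le_one hb0).mpr hab
    linarith
  have hsum : a / b + (1 - a / b) = 1 := by ring
  have := klg_convexOn.2 hx hy hw1 hw2 hsum
  have hg1 : klg 1 = 0 := by simp [klg]
  have harg : (a / b) • (1 + b * t) + (1 - a / b) • (1:ℝ) = 1 + a * t := by
    simp only [smul_eq_mul]; field_simp [hb0.ne']; ring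
  rw [harg, hg1] at this
  have : klg (1 + a * t) ≤ (a / b) * klg (1 + b * t) := by
    simpa using this
  rw [div_le_div_iff₀ ha hb0]
  calc klg (1 + a * t) * b ≤ ((a / b) * klg (1 + b * t)) * b :=
        mul_le_mul_of_nonneg_right this hb0.le
    _ = klg (1 + b * t) * a := by field_simp

lemma klg_slope_tendsto (t : ℝ) :
    Tendsto (fun a : ℝ => klg (1 + a * t) / a) (nhdsWithin 0 (Set.Ioc 0 1)) (nhds 0) := by
  have hinner : HasDerivAt (fun a : ℝ => 1 + a * t) t 0 := by
    simpa using ((hasDerivAt_id (0:ℝ)).mul_const t).const_add 1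
  have houter : HasDerivAt klg (Real.log 1) 1 := by
    have h := (Real.hasDerivAt_mul_log (one_ne_zero)).sub (hasDerivAt_id 1)
    have h2 := h.add_const 1
    show HasDerivAt (fun u : ℝ => u * Real.log u - u + 1) (Real.log 1) 1
    simpa using h2
  have houter' : HasDerivAt klg (Real.log 1) ((fun a : ℝ => 1 + a * t) 0) := by
    simpa using houter
  have hG : HasDerivAt (fun a : ℝ => klg (1 + a * t)) 0 0 := by
    have := HasDerivAt.comp (0:ℝ) houter' hinner
    simpa [Function.comp_def] using this
  have hslope := hasDerivAt_iff_tendsto_slope.mp hG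
  have hmono : nhdsWithin (0:ℝ) (Set.Ioc 0 1) ≤ nhdsWithin 0 ({0} : Set ℝ)ᶜ :=
    nhdsWithin_mono 0 (fun x hx => ne_of_gt hx.1)
  refine (hslope.mono_left hmono).congr' ?_
  filter_upwards [self_mem_nhdsWithin] with a ha
  have ha0 : a ≠ 0 := ne_of_gt ha.1
  simp [slope_fun_def_field, klg, ha0]

lemma integrable_of_nonneg_lintegral {α : Type*} [MeasurableSpace α] {μ : Measure α}
    {h : α → ℝ} (hm : Measurable h) (h0 : ∀ x, 0 ≤ h x)
    (hfin : ∫⁻ x, ENNReal.ofReal (h x) ∂μ ≠ ⊤) : Integrable h μ := by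
  have := integrable_toReal_of_lintegral_ne_top (hm.ennreal_ofReal.aemeasurable) hfin
  refine this.congr ?_
  exact Eventually.of_forall fun x => ENNReal.toReal_ofReal (h0 x)

/-- Relative entropy (KL divergence) in nats: `D(P‖Q) = ∫ log (dP/dQ) dP`. -/
noncomputable def relEnt {α : Type*} [MeasurableSpace α] (P Q : Measure α) : ℝ :=
  ∫ x, Real.log ((P.rnDeriv Q) x).toReal ∂P

/-- For probability measures `P ≪ Q`, `(1/α) D(αP + (1−α)Q ‖ Q) → 0` as `α → 0` in `(0,1]`. -/
theorem stmt_0 {α : Type*} [MeasurableSpace α] (P Q : Measure α)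
    [IsProbabilityMeasure P] [IsProbabilityMeasure Q] (hPQ : P ≪ Q) :
    Filter.Tendsto
      (fun a : ℝ => (1 / a) * relEnt (ENNReal.ofReal a • P + ENNReal.ofReal (1 - a) • Q) Q)
      (nhdsWithin 0 (Set.Ioc 0 1)) (nhds 0) := by
  set l := nhdsWithin (0:ℝ) (Set.Ioc 0 1) with hl
  set p : α → ℝ := fun x => ((P.rnDeriv Q) x).toReal with hp
  have hp_meas : Measurable p := (Measure.measurable_rnDeriv P Q).ennreal_toReal
  have hp_nonneg : ∀ x, 0 ≤ p x := fun x => ENNReal.toReal_nonneg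
  set f : ℝ → α → ℝ := fun a x => 1 + a * (p x - 1) with hf
  have hf_meas : ∀ a, Measurable (f a) := fun a =>
    ((hp_meas.sub measurable_const).const_mul a).const_add 1
  have hgf_meas : ∀ a, Measurable (fun x => klg (f a x)) := fun a =>
    ((((hf_meas a).mul (Real.measurable_log.comp (hf_meas a))).sub (hf_meas a)).add
      measurable_const)
  have hfnn : ∀ a ∈ Set.Ioc (0:ℝ) 1, ∀ x, 0 ≤ f a x := by
    intro a ha x
    have h1 := hp_nonneg x
    simp only [hf]
    nlinarith [ha.1, ha.2]
  set T : ℝ → ENNReal := fun a => ∫⁻ x, ENNReal.ofReal (klg (f a x) / a) ∂Q with hT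
  -- unconditional identification of (T a).toReal as a Bochner integral
  have hTa_eq : ∀ a ∈ Set.Ioc (0:ℝ) 1, (T a).toReal = ∫ x, klg (f a x) / a ∂Q := by
    intro a ha
    refine (integral_eq_lintegral_of_nonneg_ae ?_ ?_).symm
    · exact Eventually.of_forall fun x => div_nonneg (klg_nonneg (hfnn a ha x)) ha.1.le
    · exact ((hgf_meas a).div_const a).aestronglyMeasurable
  -- key pointwise identity
  have key : ∀ a ∈ Set.Ioo (0:ℝ) 1,
      (1 / a) * relEnt (ENNReal.ofReal a • P + ENNReal.ofReal (1 - a) • Q) Q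
        = ∫ x, klg (f a x) / a ∂Q := by
    intro a ha
    have ha0 : 0 < a := ha.1
    have ha1 : a < 1 := ha.2
    set M : Measure α := ENNReal.ofReal a • P + ENNReal.ofReal (1 - a) • Q with hM
    haveI : IsFiniteMeasure (ENNReal.ofReal a • P) := by
      constructor
      rw [Measure.smul_apply, smul_eq_mul]
      exact ENNReal.mul_lt_top ENNReal.ofReal_lt_top (measure_lt_top _ _)
    haveI : IsFiniteMeasure (ENNReal.ofReal (1 - a) • Q) := by
      constructor
      rw [Measure.smul_apply, smul_eq_mul]
      exact ENNReal.mul_lt_top ENNReal.ofReal_lt_top (measure_lt_top _ _)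
    haveI : IsFiniteMeasure M := by rw [hM]; infer_instance
    have hMQ : M ≪ Q := by
      rw [hM]
      exact Measure.AbsolutelyContinuous.add_left_iff.mpr
        ⟨hPQ.smul_left (ENNReal.ofReal a),
         (Measure.AbsolutelyContinuous.refl Q).smul_left (ENNReal.ofReal (1 - a))⟩
    -- density of M
    have hdensity : M.rnDeriv Q =ᵐ[Q]
        fun x => ENNReal.ofReal a * P.rnDeriv Q x + ENNReal.ofReal (1 - a) := by
      have h1 := Measure.rnDeriv_add' (ENNReal.ofReal a • P) (ENNReal.ofReal (1 - a) • Q) Q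
      have h2 := Measure.rnDeriv_smul_left_of_ne_top P Q
        (r := ENNReal.ofReal a) ENNReal.ofReal_ne_top
      have h3 := Measure.rnDeriv_smul_left_of_ne_top Q Q
        (r := ENNReal.ofReal (1 - a)) ENNReal.ofReal_ne_top
      have h4 := Measure.rnDeriv_self Q
      filter_upwards [h1, h2, h3, h4] with x e1 e2 e3 e4
      rw [hM]
      simp only [Pi.add_apply] at e1
      rw [e1, e2, e3]
      simp only [Pi.smul_apply, smul_eq_mul, e4, mul_one]
    have hdensR : (fun x => (M.rnDeriv Q x).toReal) =ᵐ[Q] f a := by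
      filter_upwards [hdensity, Measure.rnDeriv_lt_top P Q] with x hx hlt
      rw [hx, ENNReal.toReal_add (ENNReal.mul_ne_top ENNReal.ofReal_ne_top hlt.ne)
        ENNReal.ofReal_ne_top, ENNReal.toReal_mul, ENNReal.toReal_ofReal ha0.le,
        ENNReal.toReal_ofReal (by linarith : (0:ℝ) ≤ 1 - a)]
      simp only [hf, hp]
      ring
    -- relEnt M Q = ∫ f log f dQ
    set φ : α → ℝ := fun x => f a x * Real.log (f a x) with hφdef
    have hrel : relEnt M Q = ∫ x, φ x ∂Q := by
      rw [relEnt, ← integral_rnDeriv_smul hMQ]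
      refine integral_congr_ae ?_
      filter_upwards [hdensR] with x hx
      rw [smul_eq_mul, hx]
    have hfa_int : Integrable (f a) Q := by
      have h1 : Integrable (fun x => a * (p x - 1)) Q :=
        ((Measure.integrable_toReal_rnDeriv).sub (integrable_const 1)).const_mul a
      exact (integrable_const (1:ℝ)).add h1
    have hint_p : ∫ x, p x ∂Q = 1 := by
      have := Measure.integral_toReal_rnDeriv hPQ
      simpa [hp] using this
    have hint_f : ∫ x, f a x ∂Q = 1 := by
      have h1 : Integrable (fun x => a * (p x - 1)) Q :=
        ((Measure.integrable_toReal_rnDeriv).sub (integrable_const 1)).const_mul a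
      simp only [hf]
      rw [integral_add (integrable_const 1) h1, integral_const_mul,
        integral_sub Measure.integrable_toReal_rnDeriv (integrable_const 1), hint_p,
        integral_const]
      simp
    by_cases hφ : Integrable φ Q
    · have hsplit : ∫ x, klg (f a x) ∂Q = ∫ x, φ x ∂Q := by
        have heq : (fun x => klg (f a x)) = fun x => φ x - f a x + 1 := by
          funext x; simp [klg, hφdef]
        have hsub : Integrable (fun x => φ x - f a x) Q := hφ.sub hfa_int
        rw [heq, integral_add hsub (integrable_const 1),
          integral_sub hφ hfa_int, hint_f, integral_const]
        simp
      rw [hrel, ← hsplit, integral_div]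
      rw [one_div, inv_mul_eq_div]
    · have hnot : ¬ Integrable (fun x => klg (f a x) / a) Q := by
        intro h
        apply hφ
        have h2 : Integrable (fun x => a * (klg (f a x) / a) + f a x - 1) Q :=
          ((h.const_mul a).add hfa_int).sub (integrable_const 1)
        refine h2.congr (Eventually.of_forall fun x => ?_)
        have hcl : a * (klg (f a x) / a) = klg (f a x) := by
          field_simp
        show a * (klg (f a x) / a) + f a x - 1 = φ x
        rw [hcl]
        simp only [klg, hφdef]
        ring
      rw [hrel, integral_undef hφ, integral_undef hnot, mul_zero]
  -- eventual membership
  have hev : ∀ᶠ a in l, a ∈ Set.Ioo (0:ℝ) 1 := by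
    filter_upwards [self_mem_nhdsWithin,
      (eventually_lt_nhds one_pos).filter_mono nhdsWithin_le_nhds] with a h1 h2
    exact ⟨h1.1, h2⟩
  have hred : Tendsto (fun a : ℝ => ∫ x, klg (f a x) / a ∂Q) l (nhds 0) := by
    by_cases hfin : ∃ b ∈ Set.Ioo (0:ℝ) 1, T b ≠ ⊤
    · obtain ⟨b, hb, hTb⟩ := hfin
      have hbIoc : b ∈ Set.Ioc (0:ℝ) 1 := ⟨hb.1, hb.2.le⟩
      set D : α → ℝ := fun x => klg (f b x) / b with hD
      have hD0 : ∀ x, 0 ≤ D x := fun x =>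
        div_nonneg (klg_nonneg (hfnn b hbIoc x)) hb.1.le
      have hDint : Integrable D Q :=
        integrable_of_nonneg_lintegral ((hgf_meas b).div_const b) hD0 hTb
      have hbound : ∀ a ∈ Set.Ioc (0:ℝ) 1, a ≤ b → ∀ x, klg (f a x) / a ≤ D x := by
        intro a ha hab x
        have ht : (-1:ℝ) ≤ p x - 1 := by linarith [hp_nonneg x]
        exact klg_chord ha.1 hab hb.2.le ht
      have hDCT : Tendsto (fun a : ℝ => ∫ x, klg (f a x) / a ∂Q) l
          (nhds (∫ x, (0:ℝ) ∂Q)) := by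
        refine tendsto_integral_filter_of_dominated_convergence D ?_ ?_ hDint ?_
        · exact Eventually.of_forall fun a => ((hgf_meas a).div_const a).aestronglyMeasurable
        · filter_upwards [hev, (eventually_lt_nhds hb.1).filter_mono nhdsWithin_le_nhds]
            with a ha hab
          refine Eventually.of_forall fun x => ?_
          have haIoc : a ∈ Set.Ioc (0:ℝ) 1 := ⟨ha.1, ha.2.le⟩
          rw [Real.norm_eq_abs,
            abs_of_nonneg (div_nonneg (klg_nonneg (hfnn a haIoc x)) ha.1.le)]
          exact hbound a haIoc hab.le x
        · exact Eventually.of_forall fun x => klg_slope_tendsto (p x - 1)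
      simpa using hDCT
    · push_neg at hfin
      refine Tendsto.congr' ?_ (tendsto_const_nhds (α := ℝ) (f := l))
      filter_upwards [hev] with a ha
      have haIoc : a ∈ Set.Ioc (0:ℝ) 1 := ⟨ha.1, ha.2.le⟩
      rw [← hTa_eq a haIoc, hfin a ha]
      simp
  refine Tendsto.congr' ?_ hred
  filter_upwards [hev] with a ha
  exact (key a ha).symm
end

section
/- Let g : X → [−∞, +∞] and let X̄ be a random variable on X with E[exp(g(X̄))] < ∞. Then for any random variable X on X with D(P_X ‖ P_X̄) < ∞, E[g(X)] − D(P_X ‖ P_X̄) ≤ log E[exp(g(X̄))], with equality if and only if X has distribution P_{X⋆} satisfying log(dP_{X⋆}/dP_X̄)(x) = g(x) − log E[exp(g(X̄))]. -/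
open MeasureTheory
open scoped ENNReal

/-- Donsker–Varadhan: if `E[exp g(X̄)] < ∞` then for any `X` with `D(P_X ‖ P_X̄) < ∞`,
`E[g(X)] − D(P_X‖P_X̄) ≤ log E[exp g(X̄)]`, with equality iff the distribution of `X` is the
Gibbs tilting of `P_X̄`, i.e. `log (dP_X/dP_X̄)(x) = g(x) − log E[exp g(X̄)]` a.e. -/
theorem stmt_1 {α : Type*} [MeasurableSpace α] (ν μ : Measure α)
    [IsProbabilityMeasure ν] [IsProbabilityMeasure μ]
    (g : α → ℝ) (hgexp : Integrable (fun x => Real.exp (g x)) ν)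
    (hgint : Integrable g μ) (hac : μ ≪ ν)
    (hKLfin : Integrable (fun x => Real.log ((μ.rnDeriv ν) x).toReal) μ) :
    (∫ x, g x ∂μ) - relEnt μ ν ≤ Real.log (∫ x, Real.exp (g x) ∂ν) ∧
      ((∫ x, g x ∂μ) - relEnt μ ν = Real.log (∫ x, Real.exp (g x) ∂ν) ↔
        ∀ᵐ x ∂ν, Real.log ((μ.rnDeriv ν) x).toReal
          = g x - Real.log (∫ x', Real.exp (g x') ∂ν)) := by
  set Z : ℝ := ∫ x, Real.exp (g x) ∂ν with hZ_def
  have hZ : 0 < Z := integral_exp_pos hgexp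
  set L : α → ℝ := fun x => Real.log ((μ.rnDeriv ν) x).toReal with hL_def
  set h : α → ℝ := fun x => g x - Real.log Z - L x with hh_def
  set w : α → ℝ := fun x => Real.exp (g x - Real.log Z) / ((μ.rnDeriv ν) x).toReal
    with hw_def
  have hw_nonneg : ∀ x, 0 ≤ w x := fun x =>
    div_nonneg (Real.exp_nonneg _) ENNReal.toReal_nonneg
  -- measurability of g
  have hg_meas : AEMeasurable g ν := by
    have h1 : AEMeasurable (fun x => Real.exp (g x)) ν := hgexp.aemeasurable
    have h2 : AEMeasurable (fun x => Real.log (Real.exp (g x))) ν :=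
      Real.measurable_log.comp_aemeasurable h1
    refine h2.congr (Filter.Eventually.of_forall fun x => ?_)
    exact Real.log_exp (g x)
  have hw_meas : AEMeasurable w ν := by
    refine AEMeasurable.div ?_ (Measure.measurable_rnDeriv μ ν).ennreal_toReal.aemeasurable
    exact Real.measurable_exp.comp_aemeasurable (hg_meas.sub aemeasurable_const)
  -- integrability of exp (g - log Z) and its integral
  have hegz_eq : (fun x => Real.exp (g x - Real.log Z)) = fun x => Real.exp (g x) * Z⁻¹ := by
    funext x; rw [Real.exp_sub, Real.exp_log hZ, div_eq_mul_inv]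
  have hegz_int : Integrable (fun x => Real.exp (g x - Real.log Z)) ν := by
    rw [hegz_eq]; exact hgexp.mul_const _
  have hegz_integral : ∫ x, Real.exp (g x - Real.log Z) ∂ν = 1 := by
    rw [hegz_eq, integral_mul_const, ← hZ_def, mul_inv_cancel₀ hZ.ne']
  -- the ENNReal-valued version
  set e : α → ℝ≥0∞ := fun x => ENNReal.ofReal (Real.exp (g x - Real.log Z)) with he_def
  have he_lint : ∫⁻ x, e x ∂ν = 1 := by
    rw [he_def, ← ofReal_integral_eq_lintegral_ofReal hegz_int
      (Filter.Eventually.of_forall fun x => Real.exp_nonneg _), hegz_integral,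
      ENNReal.ofReal_one]
  -- pointwise equality on the good set
  have hpoint_eq : ∀ x, μ.rnDeriv ν x ≠ 0 → μ.rnDeriv ν x ≠ ∞ →
      μ.rnDeriv ν x * ENNReal.ofReal (w x) = e x := by
    intro x h0 htop
    have ht : 0 < ((μ.rnDeriv ν) x).toReal := ENNReal.toReal_pos h0 htop
    calc μ.rnDeriv ν x * ENNReal.ofReal (w x)
        = ENNReal.ofReal ((μ.rnDeriv ν x).toReal) * ENNReal.ofReal (w x) := by
          rw [ENNReal.ofReal_toReal htop]
      _ = ENNReal.ofReal ((μ.rnDeriv ν x).toReal * w x) := by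
          rw [ENNReal.ofReal_mul ENNReal.toReal_nonneg]
      _ = e x := by
          have : (μ.rnDeriv ν x).toReal * w x = Real.exp (g x - Real.log Z) :=
            mul_div_cancel₀ _ ht.ne'
          rw [this]
  -- pointwise inequality
  have hpoint_le : ∀ x, μ.rnDeriv ν x * ENNReal.ofReal (w x) ≤ e x := by
    intro x
    rcases eq_or_ne (μ.rnDeriv ν x) 0 with h0 | h0
    · simp [h0]
    rcases eq_or_ne (μ.rnDeriv ν x) ∞ with htop | htop
    · have hw0 : w x = 0 := by simp [hw_def, htop]
      simp [hw0]
    · exact le_of_eq (hpoint_eq x h0 htop)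
  have hw_ofReal_meas : AEMeasurable (fun x => ENNReal.ofReal (w x)) ν :=
    hw_meas.ennreal_ofReal
  have hlint_mu : ∫⁻ x, ENNReal.ofReal (w x) ∂μ
      = ∫⁻ x, μ.rnDeriv ν x * ENNReal.ofReal (w x) ∂ν :=
    (lintegral_rnDeriv_mul hac hw_ofReal_meas).symm
  have hlint_le : ∫⁻ x, ENNReal.ofReal (w x) ∂μ ≤ 1 := by
    rw [hlint_mu, ← he_lint]
    exact lintegral_mono hpoint_le
  -- Integrability of w with respect to μ
  have hw_meas_mu : AEMeasurable w μ := hw_meas.mono_ac hac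
  have hw_int : Integrable w μ := by
    refine ⟨hw_meas_mu.aestronglyMeasurable, ?_⟩
    rw [hasFiniteIntegral_iff_ofReal (Filter.Eventually.of_forall hw_nonneg)]
    exact lt_of_le_of_lt hlint_le ENNReal.one_lt_top
  have hw_integral_eq : ENNReal.ofReal (∫ x, w x ∂μ) = ∫⁻ x, ENNReal.ofReal (w x) ∂μ :=
    ofReal_integral_eq_lintegral_ofReal hw_int (Filter.Eventually.of_forall hw_nonneg)
  have hw_integral_le : ∫ x, w x ∂μ ≤ 1 := by
    have := hw_integral_eq ▸ hlint_le
    rwa [← ENNReal.ofReal_one, ENNReal.ofReal_le_ofReal_iff zero_le_one] at this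
  -- exp h = w a.e. μ
  have hexp_h : ∀ᵐ x ∂μ, Real.exp (h x) = w x := by
    filter_upwards [Measure.rnDeriv_pos hac, hac.ae_le (Measure.rnDeriv_lt_top μ ν)]
      with x h0 htop
    have ht : 0 < ((μ.rnDeriv ν) x).toReal := ENNReal.toReal_pos h0.ne' htop.ne
    have hx : h x = (g x - Real.log Z) - Real.log ((μ.rnDeriv ν x).toReal) := rfl
    rw [hx, Real.exp_sub, Real.exp_log ht]
  have i_glogZ : Integrable (fun x => g x - Real.log Z) μ := hgint.sub (integrable_const _)
  have h_int : Integrable h μ := i_glogZ.sub hKLfin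
  have hh_integral : ∫ x, h x ∂μ = (∫ x, g x ∂μ) - Real.log Z - relEnt μ ν := by
    simp only [hh_def]
    rw [integral_sub i_glogZ hKLfin,
      integral_sub hgint (integrable_const _), integral_const]
    simp [relEnt, hL_def, measure_univ]
  have hmono : ∀ᵐ x ∂μ, h x ≤ w x - 1 := by
    filter_upwards [hexp_h] with x hx
    have := Real.add_one_le_exp (h x)
    rw [hx] at this; linarith
  have i_w1 : Integrable (fun x => w x - 1) μ := hw_int.sub (integrable_const 1)
  have hkey : ∫ x, h x ∂μ ≤ 0 := by
    calc ∫ x, h x ∂μ ≤ ∫ x, (w x - 1) ∂μ := integral_mono_ae h_int i_w1 hmono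
      _ = (∫ x, w x ∂μ) - 1 := by
          rw [integral_sub hw_int (integrable_const 1), integral_const]
          simp [measure_univ]
      _ ≤ 0 := by linarith
  constructor
  · linarith [hh_integral ▸ hkey]
  constructor
  · -- equality implies the a.e. identity
    intro hEq
    have hE : ∫ x, h x ∂μ = 0 := by rw [hh_integral]; linarith
    set k : α → ℝ := fun x => w x - 1 - h x with hk_def
    have hk_int : Integrable k μ := i_w1.sub h_int
    have hk_nonneg : 0 ≤ᵐ[μ] k := by
      filter_upwards [hmono] with x hx; simp only [hk_def, Pi.zero_apply]; linarith
    have hk_integral : ∫ x, k x ∂μ = (∫ x, w x ∂μ) - 1 := by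
      simp only [hk_def]
      rw [integral_sub i_w1 h_int, integral_sub hw_int (integrable_const 1),
        integral_const, hE]
      simp [measure_univ]
    have hk_zero : ∫ x, k x ∂μ = 0 :=
      le_antisymm (by rw [hk_integral]; linarith) (integral_nonneg_of_ae hk_nonneg)
    have hk_ae : k =ᵐ[μ] 0 := (integral_eq_zero_iff_of_nonneg_ae hk_nonneg hk_int).mp hk_zero
    -- h = 0 a.e. μ
    have hh_ae : ∀ᵐ x ∂μ, h x = 0 := by
      filter_upwards [hk_ae, hexp_h] with x hkx hex
      simp only [hk_def, Pi.zero_apply] at hkx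
      by_contra hne
      have := Real.add_one_lt_exp hne
      rw [hex] at this; linarith
    -- ∫ w dμ = 1, hence the lintegral equality, hence rnDeriv ≠ 0 ν-a.e.
    have hw_one : ∫ x, w x ∂μ = 1 := by
      have := hk_zero; rw [hk_integral] at this; linarith
    have hlint_one : ∫⁻ x, ENNReal.ofReal (w x) ∂μ = 1 := by
      rw [← hw_integral_eq, hw_one, ENNReal.ofReal_one]
    have hq_meas : AEMeasurable (fun x => μ.rnDeriv ν x * ENNReal.ofReal (w x)) ν :=
      (Measure.measurable_rnDeriv μ ν).aemeasurable.mul hw_ofReal_meas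
    have he_meas : AEMeasurable e ν := by
      exact (Real.measurable_exp.comp_aemeasurable
        (hg_meas.sub aemeasurable_const)).ennreal_ofReal
    have hsub_zero : ∫⁻ x, (e x - μ.rnDeriv ν x * ENNReal.ofReal (w x)) ∂ν = 0 := by
      rw [lintegral_sub' hq_meas (by rw [← hlint_mu, hlint_one]; exact ENNReal.one_ne_top)
        (Filter.Eventually.of_forall hpoint_le), he_lint, ← hlint_mu, hlint_one, tsub_self]
    have hae_eq : ∀ᵐ x ∂ν, e x = μ.rnDeriv ν x * ENNReal.ofReal (w x) := by
      have := (lintegral_eq_zero_iff' (he_meas.sub hq_meas)).mp hsub_zero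
      filter_upwards [this] with x hx
      simp only [Pi.sub_apply, Pi.zero_apply] at hx
      exact le_antisymm (tsub_eq_zero_iff_le.mp hx) (hpoint_le x)
    have hpos : ∀ᵐ x ∂ν, μ.rnDeriv ν x ≠ 0 := by
      filter_upwards [hae_eq] with x hx h0
      rw [h0, zero_mul] at hx
      have hepos : 0 < e x := ENNReal.ofReal_pos.mpr (Real.exp_pos _)
      exact hepos.ne' hx
    have hν_ac : ν ≪ μ := by
      have := withDensity_absolutelyContinuous' (μ := ν)
        (Measure.measurable_rnDeriv μ ν).aemeasurable hpos
      rwa [Measure.withDensity_rnDeriv_eq μ ν hac] at this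
    have hh_ae_ν : ∀ᵐ x ∂ν, h x = 0 := hh_ae.filter_mono hν_ac.ae_le
    filter_upwards [hh_ae_ν] with x hx
    simp only [hh_def, hL_def] at hx ⊢
    linarith
  · -- the a.e. identity implies equality
    intro hcond
    have hcond_mu : ∀ᵐ x ∂μ, h x = 0 := by
      filter_upwards [hcond.filter_mono hac.ae_le] with x hx
      simp only [hh_def, hL_def]
      rw [hx]; ring
    have : ∫ x, h x ∂μ = 0 := by
      rw [integral_congr_ae (g := fun _ => (0 : ℝ)) hcond_mu, integral_zero]
    rw [hh_integral] at this
    linarith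
end

section
/- Suppose W_1, W_2, … are uncorrelated random variables and (c_n) is a strictly positive sequence increasing to +∞ such that the series ∑_{i=1}^∞ Var(W_i / c_i) converges. Then (1/c_n)(∑_{i=1}^n W_i − E[∑_{i=1}^n W_i]) → 0 in L². -/
open MeasureTheory ProbabilityTheory Filter
open scoped BigOperators

-- Kronecker-type lemma for nonnegative terms
lemma kron_nonneg {a b : ℕ → ℝ} (ha : ∀ i, 0 ≤ a i) (hb : ∀ n, 0 < b n)
    (hbm : Monotone b) (hbt : Tendsto b atTop atTop)
    (hs : Summable fun i => a i / b i) :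
    Tendsto (fun n => (∑ i ∈ Finset.range n, a i) / b n) atTop (nhds 0) := by
  rw [Metric.tendsto_atTop]
  intro ε hε
  have htail := tendsto_sum_nat_add (fun i => a i / b i)
  obtain ⟨N, hN⟩ := (htail.eventually (gt_mem_nhds (half_pos hε))).exists
  set S := ∑ i ∈ Finset.range N, a i with hS
  have hS0 : 0 ≤ S := Finset.sum_nonneg fun i _ => ha i
  obtain ⟨M, hM⟩ := (hbt.eventually_ge_atTop (2 * S / ε + 1)).exists_forall_of_atTop
  refine ⟨max M N, fun n hn => ?_⟩
  have hnM : M ≤ n := le_trans (le_max_left _ _) hn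
  have hnN : N ≤ n := le_trans (le_max_right _ _) hn
  have hsum_nonneg : 0 ≤ (∑ i ∈ Finset.range n, a i) / b n :=
    div_nonneg (Finset.sum_nonneg fun i _ => ha i) (hb n).le
  rw [Real.dist_eq, sub_zero, abs_of_nonneg hsum_nonneg]
  have hsplit : ∑ i ∈ Finset.range n, a i = S + ∑ i ∈ Finset.Ico N n, a i := by
    rw [hS, ← Finset.sum_range_add_sum_Ico _ hnN]
  have h1 : S / b n < ε / 2 := by
    have hbn : 2 * S / ε + 1 ≤ b n := hM n hnM
    have h2S : 0 < 2 * S / ε + 1 := by positivity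
    calc S / b n ≤ S / (2 * S / ε + 1) := by
          apply div_le_div_of_nonneg_left hS0 h2S hbn
      _ < ε / 2 := by
          rw [div_lt_div_iff₀ h2S two_pos]
          have hc : ε * (2 * S / ε) = 2 * S := by
            field_simp
          nlinarith
  have h2 : (∑ i ∈ Finset.Ico N n, a i) / b n ≤ ε / 2 := by
    rw [Finset.sum_div]
    calc ∑ i ∈ Finset.Ico N n, a i / b n
        ≤ ∑ i ∈ Finset.Ico N n, a i / b i := by
          apply Finset.sum_le_sum
          intro i hi
          exact div_le_div_of_nonneg_left (ha i) (hb i) (hbm (Finset.mem_Ico.1 hi).2.le)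
      _ = ∑ i ∈ Finset.range (n - N), a (N + i) / b (N + i) := by
          rw [Finset.sum_Ico_eq_sum_range]
      _ ≤ ∑' i, a (i + N) / b (i + N) := by
          have hsm : Summable (fun i => a (i + N) / b (i + N)) :=
            (summable_nat_add_iff N).2 hs
          have h := Summable.sum_le_tsum (Finset.range (n - N))
            (fun i _ => div_nonneg (ha _) (hb _).le) hsm
          simpa [add_comm] using h
      _ ≤ ε / 2 := hN.le
  calc (∑ i ∈ Finset.range n, a i) / b n
      = S / b n + (∑ i ∈ Finset.Ico N n, a i) / b n := by rw [hsplit, add_div]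
    _ < ε / 2 + ε / 2 := by linarith
    _ = ε := add_halves ε

/-- Law of large numbers for uncorrelated random variables: if the `W i` are uncorrelated with
finite variances, `(c n)` is strictly positive, increasing to `+∞`, and
`∑ Var(W i / c i) < ∞`, then `(1/c n)(∑_{i<n} W i − E[∑_{i<n} W i]) → 0` in `L²`. -/
theorem stmt_2 {Ω : Type*} [MeasurableSpace Ω] (μ : Measure Ω) [IsProbabilityMeasure μ]
    (W : ℕ → Ω → ℝ) (hL2 : ∀ i, MemLp (W i) 2 μ)
    (huncorr : ∀ i j, i ≠ j →
      ∫ ω, (W i ω - ∫ ω', W i ω' ∂μ) * (W j ω - ∫ ω', W j ω' ∂μ) ∂μ = 0)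
    (c : ℕ → ℝ) (hcpos : ∀ n, 0 < c n) (hcmono : Monotone c)
    (hctop : Tendsto c atTop atTop)
    (hsum : Summable fun i => variance (W i) μ / c i ^ 2) :
    Tendsto
      (fun n => ∫ ω,
        ((1 / c n) * ((∑ i ∈ Finset.range n, W i ω) - ∫ ω', ∑ i ∈ Finset.range n, W i ω' ∂μ)) ^ 2 ∂μ)
      atTop (nhds 0) := by
  set m : ℕ → ℝ := fun i => ∫ ω, W i ω ∂μ with hm
  have hWint : ∀ i, Integrable (W i) μ := fun i => (hL2 i).integrable one_le_two
  have hY2 : ∀ i, MemLp (fun ω => W i ω - m i) 2 μ :=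
    fun i => (hL2 i).sub (memLp_const (m i))
  have hYY : ∀ i j, Integrable (fun ω => (W i ω - m i) * (W j ω - m j)) μ := by
    intro i j
    have h := (hY2 j).smul (hY2 i) (p := 2) (q := 2) (r := 1)
      (hpqr := ⟨by rw [inv_one, ENNReal.inv_two_add_inv_two]⟩)
    rw [memLp_one_iff_integrable] at h
    simpa [Pi.smul_apply, smul_eq_mul, Pi.mul_def, mul_comm] using h
  have key : ∀ n, ∫ ω, ((∑ i ∈ Finset.range n, W i ω) -
      ∫ ω', ∑ i ∈ Finset.range n, W i ω' ∂μ) ^ 2 ∂μ =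
      ∑ i ∈ Finset.range n, variance (W i) μ := by
    intro n
    have h1 : (∫ ω', ∑ i ∈ Finset.range n, W i ω' ∂μ) = ∑ i ∈ Finset.range n, m i :=
      integral_finset_sum _ fun i _ => hWint i
    have h2 : ∀ ω, ((∑ i ∈ Finset.range n, W i ω) - ∑ i ∈ Finset.range n, m i) ^ 2 =
        ∑ i ∈ Finset.range n, ∑ j ∈ Finset.range n, (W i ω - m i) * (W j ω - m j) := by
      intro ω
      rw [← Finset.sum_sub_distrib, sq, Finset.sum_mul_sum]
    rw [h1]
    simp_rw [h2]
    rw [integral_finset_sum _ fun i _ => integrable_finset_sum _ fun j _ => hYY i j]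
    refine Finset.sum_congr rfl fun i _ => ?_
    rw [integral_finset_sum _ fun j _ => hYY i j]
    rw [Finset.sum_eq_single i]
    · have hv : variance (W i) μ = μ[((W i - fun _ => μ[W i]) ^ 2 : Ω → ℝ)] := by
        rw [variance_eq_integral (hL2 i).aestronglyMeasurable.aemeasurable]; rfl
      simp only [Pi.pow_apply, Pi.sub_apply] at hv
      rw [hv]
      simp_rw [sq]
      rfl
    · intro j _ hji
      exact huncorr i j (fun h => hji h.symm)
    · intro hi; exact absurd ‹i ∈ Finset.range n› hi
  have heq : ∀ n, (∫ ω, ((1 / c n) * ((∑ i ∈ Finset.range n, W i ω) -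
      ∫ ω', ∑ i ∈ Finset.range n, W i ω' ∂μ)) ^ 2 ∂μ) =
      (∑ i ∈ Finset.range n, variance (W i) μ) / c n ^ 2 := by
    intro n
    simp_rw [mul_pow, integral_const_mul, key n, div_pow, one_pow, one_div,
      inv_mul_eq_div]
  simp only [heq]
  exact kron_nonneg (fun i => variance_nonneg _ _) (fun n => pow_pos (hcpos n) 2)
    (fun i j hij => pow_le_pow_left₀ (hcpos i).le (hcmono hij) 2)
    (by simpa [sq] using hctop.atTop_mul_atTop₀ hctop) hsum
end

section
/- Fix b ≥ 0. There exists q ≥ 0 such that for all real z ≥ −1/(2b) and all integers n ≥ 1: Q(√n · z) − Q(√n · z · (1 + b z)) ≤ q/√n, where Q is the standard Gaussian complementary cdf. -/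
open MeasureTheory ProbabilityTheory

/-- The standard Gaussian complementary cdf `Q(t) = P[Z > t]`. -/
noncomputable def gaussQ (t : ℝ) : ℝ := ((gaussianReal 0 1) (Set.Ioi t)).toReal

lemma gaussPdf_mono {x s : ℝ} (h : s ^ 2 ≤ x ^ 2) :
    gaussianPDFReal 0 1 x ≤ gaussianPDFReal 0 1 s := by
  unfold gaussianPDFReal
  simp only [NNReal.coe_one, mul_one, sub_zero]
  exact mul_le_mul_of_nonneg_left (Real.exp_le_exp.2 (by nlinarith)) (by positivity)

lemma gaussPdf_sq_bound (x : ℝ) : x ^ 2 * gaussianPDFReal 0 1 (x / 2) ≤ 4 := by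
  unfold gaussianPDFReal
  simp only [NNReal.coe_one, mul_one, sub_zero]
  have h2π : (2:ℝ) ≤ Real.sqrt (2 * Real.pi) := by
    have h4 : Real.sqrt 4 = 2 := by
      rw [show (4:ℝ) = 2^2 by norm_num]
      exact Real.sqrt_sq (by norm_num)
    have := Real.sqrt_le_sqrt (show (4:ℝ) ≤ 2 * Real.pi by nlinarith [Real.pi_gt_three])
    rw [h4] at this
    exact this
  have hexp : x ^ 2 * Real.exp (-(x / 2) ^ 2 / 2) ≤ 8 := by
    have h1 : x ^ 2 / 8 ≤ Real.exp (x ^ 2 / 8) :=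
      le_trans (by linarith [Real.add_one_le_exp (x^2/8)]) le_rfl
    have h2 : Real.exp (-(x / 2) ^ 2 / 2) = (Real.exp (x ^ 2 / 8))⁻¹ := by
      rw [← Real.exp_neg]; ring_nf
    rw [h2]
    rw [mul_inv_le_iff₀ (Real.exp_pos _)]
    nlinarith [Real.exp_pos (x^2/8), sq_nonneg x]
  have hinv : (Real.sqrt (2 * Real.pi))⁻¹ ≤ (2:ℝ)⁻¹ := by
    apply inv_anti₀ (by norm_num) h2π
  calc x ^ 2 * ((Real.sqrt (2 * Real.pi))⁻¹ * Real.exp (-(x / 2) ^ 2 / 2))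
      = (Real.sqrt (2 * Real.pi))⁻¹ * (x ^ 2 * Real.exp (-(x / 2) ^ 2 / 2)) := by ring
    _ ≤ (2:ℝ)⁻¹ * 8 := mul_le_mul hinv hexp (by positivity) (by norm_num)
    _ = 4 := by norm_num

lemma gaussQ_sub {a c : ℝ} (h : a ≤ c) :
    gaussQ a - gaussQ c = ∫ x in Set.Ioc a c, gaussianPDFReal 0 1 x := by
  have h1 : (1 : NNReal) ≠ 0 := one_ne_zero
  have hint : ∀ t : ℝ, 0 ≤ ∫ x in Set.Ioi t, gaussianPDFReal 0 1 x := fun t =>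
    setIntegral_nonneg measurableSet_Ioi fun x _ => gaussianPDFReal_nonneg 0 1 x
  rw [gaussQ, gaussQ, gaussianReal_apply_eq_integral _ h1, gaussianReal_apply_eq_integral _ h1,
    ENNReal.toReal_ofReal (hint _), ENNReal.toReal_ofReal (hint _)]
  have hsplit : ∫ x in Set.Ioi a, gaussianPDFReal 0 1 x
      = (∫ x in Set.Ioc a c, gaussianPDFReal 0 1 x) + ∫ x in Set.Ioi c, gaussianPDFReal 0 1 x := by
    rw [← setIntegral_union Set.Ioc_disjoint_Ioi_same measurableSet_Ioi
      (integrable_gaussianPDFReal 0 1).integrableOn (integrable_gaussianPDFReal 0 1).integrableOn,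
      Set.Ioc_union_Ioi_eq_Ioi h]
  linarith

/-- Fix `b ≥ 0`. There is `q ≥ 0` such that for all `z ≥ −1/(2b)` and integers `n ≥ 1`,
`Q(√n z) − Q(√n z (1 + b z)) ≤ q / √n`. -/
theorem stmt_9 (b : ℝ) (hb : 0 ≤ b) :
    ∃ q : ℝ, 0 ≤ q ∧ ∀ (z : ℝ) (n : ℕ), 1 ≤ n → -(1 / (2 * b)) ≤ z →
      gaussQ (Real.sqrt n * z) - gaussQ (Real.sqrt n * z * (1 + b * z)) ≤ q / Real.sqrt n := by
  refine ⟨4 * b, by linarith, fun z n hn hz => ?_⟩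
  have hnpos : (0:ℝ) < Real.sqrt n := Real.sqrt_pos.2 (by exact_mod_cast Nat.pos_of_ne_zero (by omega))
  set a := Real.sqrt n * z with ha
  set c := Real.sqrt n * z * (1 + b * z) with hc
  have hca : c - a = Real.sqrt n * (b * z ^ 2) := by rw [ha, hc]; ring
  have hac : a ≤ c := by
    have h0 : 0 ≤ c - a := by rw [hca]; positivity
    linarith
  rw [gaussQ_sub hac]
  -- bound the density on the interval by the density at √n z / 2
  set s := Real.sqrt n * z / 2 with hs
  have hbound : ∀ x ∈ Set.Ioc a c, ‖gaussianPDFReal 0 1 x‖ ≤ gaussianPDFReal 0 1 s := by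
    intro x hx
    rw [Real.norm_of_nonneg (gaussianPDFReal_nonneg 0 1 x)]
    apply gaussPdf_mono
    rcases le_or_gt 0 z with hz0 | hz0
    · have hxa : a ≤ x := hx.1.le
      have hsa : s ≤ a := by rw [hs, ha]; nlinarith
      have hs0 : 0 ≤ s := by rw [hs]; positivity
      nlinarith
    · -- z < 0 : then b > 0 and 1 + b z ≥ 1/2
      have hbpos : 0 < b := by
        rcases eq_or_lt_of_le hb with h0 | h0
        · exfalso; rw [← h0] at hz; simp at hz; linarith
        · exact h0
      have hhalf : (1:ℝ)/2 ≤ 1 + b * z := by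
        have : -(1 / (2 * b)) * b ≤ z * b := by
          apply mul_le_mul_of_nonneg_right hz hbpos.le
        have hb' : -(1 / (2 * b)) * b = -(1/2) := by field_simp; try ring
        nlinarith
      have hxc : x ≤ c := hx.2
      have hcs : c ≤ s := by
        rw [hc, hs]
        nlinarith [mul_nonneg (mul_nonneg hnpos.le (neg_nonneg.2 hz0.le))
          (show (0:ℝ) ≤ 1 + b * z - 1/2 by linarith)]
      have hs0 : s ≤ 0 := by rw [hs]; nlinarith
      nlinarith
  have hC : 0 ≤ gaussianPDFReal 0 1 s := gaussianPDFReal_nonneg 0 1 s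
  have hvol : (volume (Set.Ioc a c)).toReal = c - a := by
    rw [Real.volume_Ioc, ENNReal.toReal_ofReal (by linarith)]
  have hnorm := norm_setIntegral_le_of_norm_le_const_ae' (μ := volume)
    (by exact measure_Ioc_lt_top) (Filter.Eventually.of_forall hbound)
  rw [measureReal_def, hvol] at hnorm
  have hle : ∫ x in Set.Ioc a c, gaussianPDFReal 0 1 x
      ≤ gaussianPDFReal 0 1 s * (c - a) := le_trans (le_abs_self _) hnorm
  have hkey : gaussianPDFReal 0 1 s * (c - a) ≤ 4 * b / Real.sqrt n := by
    have hx2 : Real.sqrt n * z ^ 2 = (Real.sqrt n * z) ^ 2 / Real.sqrt n := by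
      field_simp
    have h4 : (Real.sqrt n * z) ^ 2 * gaussianPDFReal 0 1 s ≤ 4 := by
      have := gaussPdf_sq_bound (Real.sqrt n * z)
      rwa [show Real.sqrt n * z / 2 = s from rfl] at this
    calc gaussianPDFReal 0 1 s * (c - a)
        = gaussianPDFReal 0 1 s * (Real.sqrt n * (b * z ^ 2)) := by rw [hca]
      _ = b * ((Real.sqrt n * z) ^ 2 * gaussianPDFReal 0 1 s) / Real.sqrt n := by
          field_simp
      _ ≤ b * 4 / Real.sqrt n := by
          gcongr
          try exact mul_le_mul_of_nonneg_left h4 hb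
      _ = 4 * b / Real.sqrt n := by ring
  linarith
end

section
/- Reverse Pinsker inequality: for probability distributions P and Q on a finite set B with Q(b) > 0 for all b ∈ B, D(P ‖ Q) ≤ (log e / min_{b∈B} Q(b)) · |P − Q|², where |P − Q| is the Euclidean norm of the difference of the probability vectors. -/
open scoped BigOperators

/-- Reverse Pinsker inequality on a finite alphabet (in nats, so `log e = 1`):
`D(P‖Q) ≤ (1 / min_b Q(b)) · |P − Q|²` where `|·|` is the Euclidean norm. -/
theorem stmt_11 {B : Type*} [Fintype B] [Nonempty B] (P Q : B → ℝ)
    (hP0 : ∀ b, 0 ≤ P b) (hP1 : ∑ b, P b = 1)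
    (hQ0 : ∀ b, 0 < Q b) (hQ1 : ∑ b, Q b = 1) :
    ∑ b, P b * Real.log (P b / Q b) ≤ (1 / ⨅ b, Q b) * ∑ b, (P b - Q b) ^ 2 := by
  obtain ⟨b0, hb0⟩ := exists_eq_ciInf_of_finite (f := Q)
  have hm : 0 < ⨅ b, Q b := hb0 ▸ hQ0 b0
  have hmle : ∀ b, (⨅ b, Q b) ≤ Q b := fun b =>
    ciInf_le (Set.Finite.bddBelow (Set.finite_range Q)) b
  have step1 : ∑ b, P b * Real.log (P b / Q b) ≤ ∑ b, (P b - Q b) ^ 2 / Q b := by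
    have h : ∀ b, P b * Real.log (P b / Q b) ≤ (P b - Q b) ^ 2 / Q b + (P b - Q b) := by
      intro b
      rcases eq_or_lt_of_le (hP0 b) with h0 | h0
      · simp [← h0, sq, mul_div_assoc, div_self (hQ0 b).ne']
      · have hlog : Real.log (P b / Q b) ≤ P b / Q b - 1 :=
          Real.log_le_sub_one_of_pos (div_pos h0 (hQ0 b))
        have := mul_le_mul_of_nonneg_left hlog (hP0 b)
        refine this.trans_eq ?_
        have hq := (hQ0 b).ne'
        field_simp
        ring
    calc ∑ b, P b * Real.log (P b / Q b)
        ≤ ∑ b, ((P b - Q b) ^ 2 / Q b + (P b - Q b)) := Finset.sum_le_sum fun b _ => h b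
      _ = ∑ b, (P b - Q b) ^ 2 / Q b := by
          rw [Finset.sum_add_distrib, Finset.sum_sub_distrib, hP1, hQ1]; ring
  refine step1.trans ?_
  rw [Finset.mul_sum]
  refine Finset.sum_le_sum fun b _ => ?_
  rw [div_eq_inv_mul, one_div]
  exact mul_le_mul_of_nonneg_right (inv_anti₀ hm (hmle b)) (sq_nonneg _)
end

section
/- For any probability distribution P_X on a finite set A and any n ≥ 1, the minimum Euclidean distance n-type approximation P_X̂ (over n-types satisfying the same linear cost constraint) satisfies |P_X − P_X̂| ≤ √(|A|(|A|−1)) / n. -/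
open scoped BigOperators

/-- Minimum-Euclidean-distance `n`-type approximation: for any probability vector `P` on a finite
alphabet `A` satisfying a linear cost constraint `∑ P(a) b(a) ≤ β`, and any `n ≥ 1`, there is an
`n`-type `Q` (all masses integer multiples of `1/n`) satisfying the same cost constraint with
`|P − Q| ≤ √(|A|(|A|−1))/n`. -/
theorem stmt_13 {A : Type*} [Fintype A] (P : A → ℝ)
    (hP0 : ∀ a, 0 ≤ P a) (hP1 : ∑ a, P a = 1)
    (b : A → ℝ) (β : ℝ) (hcost : ∑ a, P a * b a ≤ β)
    (n : ℕ) (hn : 1 ≤ n) :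
    ∃ Q : A → ℝ, (∀ a, 0 ≤ Q a) ∧ (∑ a, Q a = 1) ∧ (∀ a, ∃ k : ℕ, Q a = (k : ℝ) / n) ∧
      (∑ a, Q a * b a ≤ β) ∧
      Real.sqrt (∑ a, (P a - Q a) ^ 2)
        ≤ Real.sqrt ((Fintype.card A : ℝ) * ((Fintype.card A : ℝ) - 1)) / n := by
  classical
  have hA : Nonempty A := by
    by_contra h
    rw [not_nonempty_iff] at h
    rw [Finset.sum_eq_zero (fun a _ => (h.false a).elim)] at hP1
    norm_num at hP1
  have hnR : (0:ℝ) < n := by exact_mod_cast hn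
  obtain ⟨a0, -, ha0⟩ := Finset.exists_min_image Finset.univ b
    ⟨Classical.arbitrary A, Finset.mem_univ _⟩
  set s : Finset A := Finset.univ.erase a0 with hs
  set f : A → ℕ := fun a => (⌊(n:ℝ) * P a⌋).toNat with hf
  have hcastf : ∀ a, ((f a : ℤ) : ℝ) = ((⌊(n:ℝ) * P a⌋ : ℤ) : ℝ) := by
    intro a
    have h0 : (0:ℝ) ≤ (n:ℝ) * P a := mul_nonneg hnR.le (hP0 a)
    exact_mod_cast congrArg (fun z : ℤ => (z : ℝ))
      (Int.toNat_of_nonneg (Int.floor_nonneg.mpr h0))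
  have hfle : ∀ a, (f a : ℝ) ≤ (n:ℝ) * P a := by
    intro a
    calc (f a : ℝ) = ((⌊(n:ℝ) * P a⌋ : ℤ) : ℝ) := by exact_mod_cast hcastf a
    _ ≤ (n:ℝ) * P a := Int.floor_le _
  have hfgt : ∀ a, (n:ℝ) * P a - 1 < (f a : ℝ) := by
    intro a
    calc (n:ℝ) * P a - 1 < ((⌊(n:ℝ) * P a⌋ : ℤ) : ℝ) := Int.sub_one_lt_floor _
    _ = (f a : ℝ) := by exact_mod_cast (hcastf a).symm
  set S : ℕ := ∑ a ∈ s, f a with hS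
  have hSn : S ≤ n := by
    have h1 : (S : ℝ) ≤ ∑ a ∈ s, (n:ℝ) * P a := by
      rw [hS]
      push_cast
      exact Finset.sum_le_sum fun a _ => hfle a
    have h2 : ∑ a ∈ s, (n:ℝ) * P a ≤ (n:ℝ) := by
      rw [← Finset.mul_sum]
      have h3 : ∑ a ∈ s, P a ≤ 1 := by
        rw [← hP1]
        exact Finset.sum_le_sum_of_subset_of_nonneg (Finset.subset_univ _)
          (fun a _ _ => hP0 a)
      nlinarith
    exact_mod_cast h1.trans h2
  set K : A → ℕ := fun a => if a = a0 then n - S else f a with hK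
  set Q : A → ℝ := fun a => (K a : ℝ) / n with hQ
  have hQ0 : ∀ a, 0 ≤ Q a := fun a => by positivity
  have hsumK : ∑ a, K a = n := by
    rw [← Finset.add_sum_erase _ K (Finset.mem_univ a0)]
    have : ∑ a ∈ s, K a = S := by
      apply Finset.sum_congr rfl
      intro a ha
      simp only [hK]
      rw [if_neg (Finset.ne_of_mem_erase ha)]
    rw [this]
    simp only [hK, if_pos rfl]
    omega
  have hQsum : ∑ a, Q a = 1 := by
    simp only [hQ]
    rw [← Finset.sum_div]
    rw [show ∑ a, (K a : ℝ) = ((∑ a, K a : ℕ) : ℝ) by push_cast; ring]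
    rw [hsumK]
    field_simp
  -- key pointwise facts
  have hDs : ∀ a ∈ s, 0 ≤ P a - Q a ∧ P a - Q a ≤ 1 / n := by
    intro a ha
    have hKa : Q a = (f a : ℝ) / n := by
      simp only [hQ, hK]
      rw [if_neg (Finset.ne_of_mem_erase ha)]
    constructor
    · rw [hKa, sub_nonneg, div_le_iff₀ hnR]
      nlinarith [hfle a]
    · rw [hKa, sub_le_iff_le_add, ← add_div, le_div_iff₀ hnR]
      nlinarith [hfgt a]
  have hsumD : ∑ a, (P a - Q a) = 0 := by rw [Finset.sum_sub_distrib, hP1, hQsum]; ring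
  have hDa0 : P a0 - Q a0 = -∑ a ∈ s, (P a - Q a) := by
    have h := Finset.add_sum_erase Finset.univ (fun a => P a - Q a) (Finset.mem_univ a0)
    rw [hsumD] at h
    linarith
  have hcard1 : 1 ≤ Fintype.card A := Fintype.card_pos
  have hscard : (s.card : ℝ) = (Fintype.card A : ℝ) - 1 := by
    rw [hs, Finset.card_erase_of_mem (Finset.mem_univ a0), Finset.card_univ]
    push_cast [hcard1]
    ring
  have hDa0abs : |P a0 - Q a0| ≤ ((Fintype.card A : ℝ) - 1) / n := by
    rw [hDa0, abs_neg, abs_of_nonneg (Finset.sum_nonneg fun a ha => (hDs a ha).1)]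
    calc ∑ a ∈ s, (P a - Q a) ≤ ∑ a ∈ s, 1 / (n:ℝ) :=
          Finset.sum_le_sum fun a ha => (hDs a ha).2
    _ = (s.card : ℝ) / n := by rw [Finset.sum_const]; push_cast; ring
    _ = _ := by rw [hscard]
  refine ⟨Q, hQ0, hQsum, ?_, ?_, ?_⟩
  · intro a
    exact ⟨K a, rfl⟩
  · -- cost
    have hkey : 0 ≤ ∑ a, (P a - Q a) * b a := by
      rw [← Finset.add_sum_erase _ (fun a => (P a - Q a) * b a) (Finset.mem_univ a0)]
      have : (P a0 - Q a0) * b a0 = -∑ a ∈ s, (P a - Q a) * b a0 := by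
        rw [hDa0, neg_mul, Finset.sum_mul]
      rw [this]
      rw [neg_add_eq_sub, ← Finset.sum_sub_distrib]
      apply Finset.sum_nonneg
      intro a ha
      have h1 := (hDs a ha).1
      have h2 := ha0 a (Finset.mem_univ a)
      nlinarith
    have : ∑ a, Q a * b a ≤ ∑ a, P a * b a := by
      have : ∑ a, (P a - Q a) * b a = ∑ a, P a * b a - ∑ a, Q a * b a := by
        rw [← Finset.sum_sub_distrib]; apply Finset.sum_congr rfl; intros; ring
      linarith [hkey, this ▸ hkey]
    linarith
  · -- distance
    have hm : (0:ℝ) ≤ (Fintype.card A : ℝ) - 1 := by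
      have : (1:ℝ) ≤ (Fintype.card A : ℝ) := by exact_mod_cast hcard1
      linarith
    have hbound : ∑ a, (P a - Q a) ^ 2
        ≤ (Fintype.card A : ℝ) * ((Fintype.card A : ℝ) - 1) / (n:ℝ)^2 := by
      rw [← Finset.add_sum_erase _ (fun a => (P a - Q a) ^ 2) (Finset.mem_univ a0)]
      have h1 : (P a0 - Q a0) ^ 2 ≤ (((Fintype.card A : ℝ) - 1) / n) ^ 2 := by
        have := hDa0abs
        have h0 : (0:ℝ) ≤ ((Fintype.card A : ℝ) - 1) / n := by positivity
        nlinarith [abs_nonneg (P a0 - Q a0), sq_abs (P a0 - Q a0)]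
      have h2 : ∑ a ∈ s, (P a - Q a) ^ 2 ≤ ((Fintype.card A : ℝ) - 1) * (1/n)^2 := by
        calc ∑ a ∈ s, (P a - Q a) ^ 2 ≤ ∑ a ∈ s, (1/(n:ℝ))^2 := by
              apply Finset.sum_le_sum
              intro a ha
              have := (hDs a ha).1
              have := (hDs a ha).2
              nlinarith
        _ = (s.card : ℝ) * (1/n)^2 := by rw [Finset.sum_const]; push_cast; ring
        _ = _ := by rw [hscard]
      have hexp : (((Fintype.card A : ℝ) - 1) / n) ^ 2 + ((Fintype.card A : ℝ) - 1) * (1/n)^2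
          = (Fintype.card A : ℝ) * ((Fintype.card A : ℝ) - 1) / (n:ℝ)^2 := by
        field_simp
        ring
      linarith
    calc Real.sqrt (∑ a, (P a - Q a) ^ 2)
        ≤ Real.sqrt ((Fintype.card A : ℝ) * ((Fintype.card A : ℝ) - 1) / (n:ℝ)^2) :=
          Real.sqrt_le_sqrt hbound
    _ = Real.sqrt ((Fintype.card A : ℝ) * ((Fintype.card A : ℝ) - 1)) / n := by
        rw [Real.sqrt_div (mul_nonneg (Nat.cast_nonneg _) hm), Real.sqrt_sq hnR.le]
end

section
/- Let P_{X̂ⁿ} be the equiprobable distribution on all sequences xⁿ ∈ Aⁿ of a fixed n-type P_X̂ (over finite alphabet A), let P_{Yⁿ} be its induced output through a memoryless channel P_{Y|X}^n to finite alphabet B, and let P_{Ŷⁿ} = P_Ŷ × ⋯ × P_Ŷ be the product output induced by the single-letter P_X̂. Then for all yⁿ with P_{Yⁿ}(yⁿ) > 0, the log-likelihood ratio satisfies log(P_{Yⁿ}(yⁿ)/P_{Ŷⁿ}(yⁿ)) ≤ (1/2)(|supp(P_X̂)| − 1) log n + c for some constant c independent of n and yⁿ, for all n large enough. -/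
open scoped BigOperators

section CountAux

variable {ι A : Type*} [Fintype ι] [DecidableEq ι] [DecidableEq A]

omit [Fintype ι] [DecidableEq ι] [DecidableEq A] in
private lemma aux1 (x x' : ι → A) (F : ∀ a, {i // x' i = a} ≃ {i // x i = a}) (a : A)
    (t : {j // x j = a}) :
    (((F (x t.1)).symm ⟨t.1, rfl⟩ : {i // x' i = x t.1}) : ι)
      = (((F a).symm t : {i // x' i = a}) : ι) := by
  obtain ⟨j, rfl⟩ := t
  rfl

omit [Fintype ι] [DecidableEq ι] [DecidableEq A] in
private lemma aux2 (x x' : ι → A) (F : ∀ a, {i // x' i = a} ≃ {i // x i = a}) (a : A)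
    (s : {i // x' i = a}) :
    ((F (x' s.1) ⟨s.1, rfl⟩ : {j // x j = x' s.1}) : ι) = ((F a s : {j // x j = a}) : ι) := by
  obtain ⟨i, rfl⟩ := s
  rfl

/-- Permutations carrying `x` to `x'` are equinumerous with families of fiber bijections. -/
def permFiberEquiv (x x' : ι → A) :
    {σ : Equiv.Perm ι // x ∘ σ = x'} ≃ (∀ a, {i // x' i = a} ≃ {i // x i = a}) where
  toFun σ a := (σ.1 : Equiv.Perm ι).subtypeEquiv (fun i => by
    rw [show x (σ.1 i) = x' i from congrFun σ.2 i])
  invFun F := ⟨⟨fun i => ((F (x' i) ⟨i, rfl⟩ : {j // x j = x' i}) : ι),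
      fun j => (((F (x j)).symm ⟨j, rfl⟩ : {i // x' i = x j}) : ι),
      fun i => by
        have h := aux1 x x' F (x' i) (F (x' i) ⟨i, rfl⟩)
        simpa using h,
      fun j => by
        have h := aux2 x x' F (x j) ((F (x j)).symm ⟨j, rfl⟩)
        simpa using h⟩,
    funext fun i => (F (x' i) ⟨i, rfl⟩).2⟩
  left_inv σ := Subtype.ext (Equiv.ext fun i => rfl)
  right_inv F := funext fun a => Equiv.ext fun s => Subtype.ext (aux2 x x' F a s)

lemma card_perm_fiber [Fintype A] (x x' : ι → A)
    (hk : ∀ a, Fintype.card {i // x i = a} = Fintype.card {i // x' i = a}) :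
    Fintype.card {σ : Equiv.Perm ι // x ∘ σ = x'}
      = ∏ a : A, (Fintype.card {i // x i = a}).factorial := by
  classical
  rw [Fintype.card_congr (permFiberEquiv x x')]
  rw [Fintype.card_pi]
  refine Finset.prod_congr rfl fun a _ => ?_
  rw [Fintype.card_equiv (Fintype.equivOfCardEq (hk a).symm)]
  rw [hk a]

end CountAux

lemma card_type_class {A : Type*} [Fintype A] [DecidableEq A] {n : ℕ} (k : A → ℕ)
    (T : Finset (Fin n → A))
    (hT : T = Finset.univ.filter
      (fun x : Fin n → A => ∀ a, (Finset.univ.filter fun i => x i = a).card = k a))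
    (hne : T.Nonempty) :
    T.card * ∏ a : A, (k a).factorial = n.factorial := by
  classical
  obtain ⟨x₀, hx₀⟩ := hne
  have hx₀' : ∀ a, (Finset.univ.filter fun i => x₀ i = a).card = k a := by
    rw [hT] at hx₀; exact (Finset.mem_filter.mp hx₀).2
  have hfiber : ∀ (x : Fin n → A), x ∈ T → ∀ a, Fintype.card {i // x i = a} = k a := by
    intro x hx a
    rw [Fintype.card_subtype]
    rw [hT] at hx
    exact (Finset.mem_filter.mp hx).2 a
  have hmem : ∀ σ : Equiv.Perm (Fin n), x₀ ∘ σ ∈ T := by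
    intro σ
    rw [hT, Finset.mem_filter]
    refine ⟨Finset.mem_univ _, fun a => ?_⟩
    rw [← hx₀' a, ← Fintype.card_subtype, ← Fintype.card_subtype]
    exact Fintype.card_congr (σ.subtypeEquiv fun i => Iff.rfl)
  have key := Finset.card_eq_sum_card_fiberwise
    (f := fun σ : Equiv.Perm (Fin n) => x₀ ∘ σ) (s := Finset.univ) (t := T)
    (fun σ _ => hmem σ)
  have hcard : ∀ x ∈ T, (Finset.univ.filter fun σ : Equiv.Perm (Fin n) => x₀ ∘ σ = x).card
      = ∏ a : A, (k a).factorial := by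
    intro x hx
    rw [← Fintype.card_subtype]
    rw [card_perm_fiber x₀ x (fun a => by
      rw [hfiber x₀ (hT ▸ Finset.mem_filter.mpr ⟨Finset.mem_univ _, hx₀'⟩) a,
        hfiber x hx a])]
    refine Finset.prod_congr rfl fun a _ => ?_
    rw [hfiber x₀ (hT ▸ Finset.mem_filter.mpr ⟨Finset.mem_univ _, hx₀'⟩) a]
  rw [Finset.sum_congr rfl hcard, Finset.sum_const, smul_eq_mul] at key
  rw [← key, Finset.card_univ, Fintype.card_perm, Fintype.card_fin]

lemma logfact_eq (m : ℕ) (hm : 1 ≤ m) :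
    Real.log (m.factorial) = Real.log (Stirling.stirlingSeq m)
      + (1/2 * Real.log (2*m) + ((m : ℝ) * Real.log m - m)) := by
  have hm0 : (0 : ℝ) < m := by exact_mod_cast hm
  have hd : (0 : ℝ) < Real.sqrt (2*m) * ((m : ℝ)/Real.exp 1)^m := by positivity
  have hfac : (m.factorial : ℝ)
      = Stirling.stirlingSeq m * (Real.sqrt (2*m) * ((m : ℝ)/Real.exp 1)^m) := by
    rw [Stirling.stirlingSeq, div_mul_cancel₀ _ hd.ne']
  have hs : 0 < Stirling.stirlingSeq m := by
    obtain ⟨j, rfl⟩ := Nat.exists_eq_add_of_le hm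
    simpa [Nat.add_comm] using Stirling.stirlingSeq'_pos j
  rw [hfac, Real.log_mul hs.ne' hd.ne',
    Real.log_mul (Real.sqrt_ne_zero'.mpr (by positivity)) (by positivity),
    Real.log_sqrt (by positivity), Real.log_pow, Real.log_div hm0.ne' (Real.exp_pos 1).ne',
    Real.log_exp]
  ring

lemma logfact_le (m : ℕ) (hm : 1 ≤ m) :
    Real.log (m.factorial) ≤ Real.log (Stirling.stirlingSeq 1)
      + (1/2 * Real.log (2*m) + ((m : ℝ) * Real.log m - m)) := by
  rw [logfact_eq m hm]
  have hmono : Stirling.stirlingSeq m ≤ Stirling.stirlingSeq 1 := by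
    obtain ⟨j, rfl⟩ := Nat.exists_eq_add_of_le hm
    simpa [Nat.add_comm] using Stirling.stirlingSeq'_antitone (Nat.zero_le j)
  have hs : 0 < Stirling.stirlingSeq m := by
    obtain ⟨j, rfl⟩ := Nat.exists_eq_add_of_le hm
    simpa [Nat.add_comm] using Stirling.stirlingSeq'_pos j
  exact add_le_add_left (Real.log_le_log hs hmono) _

lemma logfact_ge (m : ℕ) (hm : 1 ≤ m) (a₀ : ℝ) (ha₀ : 0 < a₀)
    (ha : ∀ j : ℕ, a₀ ≤ Stirling.stirlingSeq (j+1)) :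
    Real.log a₀ + (1/2 * Real.log (2*m) + ((m : ℝ) * Real.log m - m))
      ≤ Real.log (m.factorial) := by
  rw [logfact_eq m hm]
  have hb : a₀ ≤ Stirling.stirlingSeq m := by
    obtain ⟨j, rfl⟩ := Nat.exists_eq_add_of_le hm
    simpa [Nat.add_comm] using ha j
  exact add_le_add_left (Real.log_le_log ha₀ hb) _

/-- Lemma 2: let `P_{Xⁿ}` be equiprobable on the sequences of a fixed `n`-type (with counts `k`),
`P_{Yⁿ}` its induced output through the memoryless channel `W`, and `P_{Ŷⁿ}` the i.i.d. output
induced by the single-letter type. Then there is a constant `c` (uniform over types) such that for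
all large enough `n`, every type `k` and every `yⁿ` with `P_{Yⁿ}(yⁿ) > 0`,
`log (P_{Yⁿ}(yⁿ)/P_{Ŷⁿ}(yⁿ)) ≤ (1/2)(|supp| − 1) log n + c`. -/
theorem stmt_15 {A B : Type*} [Fintype A] [DecidableEq A] [Fintype B]
    (W : A → B → ℝ) (hW0 : ∀ a b, 0 ≤ W a b) (hW1 : ∀ a, ∑ b, W a b = 1) :
    ∃ (c : ℝ) (N : ℕ), ∀ n : ℕ, N ≤ n → ∀ k : A → ℕ, (∑ a, k a = n) →
      ∀ y : Fin n → B,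
        0 < (∑ x ∈ Finset.univ.filter
              (fun x : Fin n → A => ∀ a, (Finset.univ.filter fun i => x i = a).card = k a),
              ∏ i, W (x i) (y i))
            / (Finset.univ.filter
              (fun x : Fin n → A => ∀ a, (Finset.univ.filter fun i => x i = a).card = k a)).card →
        Real.log
            ((∑ x ∈ Finset.univ.filter
                (fun x : Fin n → A => ∀ a, (Finset.univ.filter fun i => x i = a).card = k a),
                ∏ i, W (x i) (y i))
              / (Finset.univ.filter
                (fun x : Fin n → A => ∀ a, (Finset.univ.filter fun i => x i = a).card = k a)).card
              / ∏ i, ∑ a, ((k a : ℝ) / n) * W a (y i))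
          ≤ (1 / 2) * (((Finset.univ.filter fun a : A => k a ≠ 0).card : ℝ) - 1) * Real.log n
              + c := by
  classical
  obtain ⟨a₀, ha₀, ha⟩ := Stirling.stirlingSeq'_bounded_by_pos_constant
  set U : ℝ := Real.log (Stirling.stirlingSeq 1) with hUdef
  refine ⟨(Fintype.card A : ℝ) * max U 0 + (Fintype.card A : ℝ) * (1/2 * Real.log 2)
    - Real.log a₀, 1, ?_⟩
  intro n hn k hk y hpos
  have hn0 : (0:ℝ) < n := by exact_mod_cast hn
  set T := Finset.univ.filter
      (fun x : Fin n → A => ∀ a, (Finset.univ.filter fun i => x i = a).card = k a) with hTdef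
  set S := ∑ x ∈ T, ∏ i, W (x i) (y i) with hSdef
  set Phat := ∏ i, ∑ a, ((k a : ℝ) / n) * W a (y i) with hPhatdef
  set supp := Finset.univ.filter (fun a : A => k a ≠ 0) with hsuppdef
  set s : ℝ := (supp.card : ℝ) with hsdef
  -- basic positivity
  have hTne : T.Nonempty := by
    rw [Finset.nonempty_iff_ne_empty]
    intro h
    rw [h] at hpos
    simp at hpos
  have hTc : 0 < T.card := Finset.card_pos.mpr hTne
  have hTcR : (0:ℝ) < (T.card : ℝ) := by exact_mod_cast hTc
  have hSpos : 0 < S := by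
    by_contra h
    push_neg at h
    have : S / (T.card : ℝ) ≤ 0 := div_nonpos_of_nonpos_of_nonneg h hTcR.le
    linarith
  set Q := ∏ a : A, ((k a : ℝ)/n)^(k a) with hQdef
  have hQfac : ∀ a : A, 0 < ((k a : ℝ)/n)^(k a) := by
    intro a
    rcases Nat.eq_zero_or_pos (k a) with h | h
    · simp [h]
    · exact pow_pos (div_pos (by exact_mod_cast h) hn0) _
  have hQpos : 0 < Q := Finset.prod_pos fun a _ => hQfac a
  -- the product of type probabilities over a sequence in T
  have hprodeq : ∀ x ∈ T, (∏ i, ((k (x i) : ℝ)/n)) = Q := by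
    intro x hx
    have hx' := (Finset.mem_filter.mp hx).2
    calc ∏ i, ((k (x i) : ℝ)/n)
        = ∏ a : A, ∏ i ∈ Finset.univ.filter (fun i => x i = a), ((k (x i) : ℝ)/n) :=
          (Finset.prod_fiberwise_of_maps_to (fun i _ => Finset.mem_univ (x i)) _).symm
      _ = Q := by
          refine Finset.prod_congr rfl fun a _ => ?_
          rw [Finset.prod_congr rfl (fun i hi => by rw [(Finset.mem_filter.mp hi).2]),
            Finset.prod_const, hx' a]
  -- lower bound of the iid output probability
  have hPhat : Q * S ≤ Phat := by
    calc Q * S = ∑ x ∈ T, Q * ∏ i, W (x i) (y i) := by rw [hSdef, Finset.mul_sum]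
      _ = ∑ x ∈ T, ∏ i, (((k (x i) : ℝ)/n) * W (x i) (y i)) :=
          Finset.sum_congr rfl fun x hx => by rw [Finset.prod_mul_distrib, hprodeq x hx]
      _ ≤ ∑ x : Fin n → A, ∏ i, (((k (x i) : ℝ)/n) * W (x i) (y i)) :=
          Finset.sum_le_sum_of_subset_of_nonneg (Finset.subset_univ T)
            (fun x _ _ => Finset.prod_nonneg fun i _ =>
              mul_nonneg (by positivity) (hW0 _ _))
      _ = Phat := by
          rw [hPhatdef, Finset.prod_univ_sum, Fintype.piFinset_univ]
  have hPhatpos : 0 < Phat := lt_of_lt_of_le (mul_pos hQpos hSpos) hPhat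
  -- main log bound via the ratio 1 / (|T| * Q)
  have hratio : S / (T.card : ℝ) / Phat ≤ 1 / ((T.card : ℝ) * Q) := by
    have h1 : S / (T.card : ℝ) / Phat ≤ S / (T.card : ℝ) / (Q * S) :=
      div_le_div_of_nonneg_left (div_nonneg hSpos.le hTcR.le) (mul_pos hQpos hSpos) hPhat
    have h2 : S / (T.card : ℝ) / (Q * S) = 1 / ((T.card : ℝ) * Q) := by
      field_simp
    linarith
  have hlog : Real.log (S / (T.card : ℝ) / Phat) ≤ -(Real.log (T.card : ℝ) + Real.log Q) := by
    calc Real.log (S / (T.card : ℝ) / Phat) ≤ Real.log (1 / ((T.card : ℝ) * Q)) :=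
        Real.log_le_log (div_pos (div_pos hSpos hTcR) hPhatpos) hratio
      _ = -(Real.log (T.card : ℝ) + Real.log Q) := by
          rw [one_div, Real.log_inv, Real.log_mul hTcR.ne' hQpos.ne']
  -- counting formula
  have hcount := card_type_class k T hTdef hTne
  have hlogD : Real.log (T.card : ℝ)
      = Real.log (n.factorial : ℝ) - ∑ a ∈ supp, Real.log ((k a).factorial : ℝ) := by
    have hc : (T.card : ℝ) * ∏ a : A, ((k a).factorial : ℝ) = (n.factorial : ℝ) := by
      exact_mod_cast hcount
    have hkf : ∀ a ∈ (Finset.univ : Finset A), ((k a).factorial : ℝ) ≠ 0 := fun a _ => by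
      positivity
    have hrestrict : ∑ a ∈ supp, Real.log ((k a).factorial : ℝ)
        = ∑ a : A, Real.log ((k a).factorial : ℝ) := by
      rw [hsuppdef]
      refine Finset.sum_filter_of_ne fun a _ h => ?_
      intro h0
      exact h (by simp [h0])
    rw [hrestrict, ← hc, Real.log_mul hTcR.ne' (Finset.prod_ne_zero_iff.mpr hkf),
      Real.log_prod hkf]
    ring
  -- the log of Q
  have hlogQ : Real.log Q
      = (∑ a ∈ supp, ((k a : ℝ) * Real.log (k a))) - (n : ℝ) * Real.log n := by
    have h1 : Real.log Q = ∑ a : A, ((k a : ℝ) * Real.log (k a) - (k a : ℝ) * Real.log n) := by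
      rw [hQdef, Real.log_prod (fun a _ => (hQfac a).ne')]
      refine Finset.sum_congr rfl fun a _ => ?_
      rw [Real.log_pow]
      rcases Nat.eq_zero_or_pos (k a) with h | h
      · simp [h]
      · rw [Real.log_div (by exact_mod_cast h.ne' : ((k a : ℝ) ≠ 0)) hn0.ne']
        ring
    have h2 : ∑ a ∈ supp, ((k a : ℝ) * Real.log (k a))
        = ∑ a : A, ((k a : ℝ) * Real.log (k a)) := by
      rw [hsuppdef]
      refine Finset.sum_filter_of_ne fun a _ h => ?_
      intro h0
      exact h (by simp [h0])
    have h3 : ∑ a : A, ((k a : ℝ) * Real.log n) = (n : ℝ) * Real.log n := by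
      rw [← Finset.sum_mul]
      congr 1
      exact_mod_cast hk
    rw [h1, Finset.sum_sub_distrib, h3, h2]
  -- support sums
  have hsupp_sum : ∑ a ∈ supp, (k a : ℝ) = (n : ℝ) := by
    have : ∑ a ∈ supp, (k a : ℝ) = ∑ a : A, (k a : ℝ) := by
      rw [hsuppdef]
      refine Finset.sum_filter_of_ne fun a _ h => ?_
      intro h0
      exact h (by simp [h0])
    rw [this]
    exact_mod_cast hk
  have hkle : ∀ a, k a ≤ n := fun a =>
    hk ▸ Finset.single_le_sum (fun _ _ => Nat.zero_le _) (Finset.mem_univ a)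
  -- factorial bounds
  have h1 : ∑ a ∈ supp, Real.log ((k a).factorial : ℝ)
      ≤ s * U + (∑ a ∈ supp, (1/2 * Real.log (2*(k a : ℝ))))
        + (∑ a ∈ supp, ((k a : ℝ) * Real.log (k a))) - (n : ℝ) := by
    have hb : ∀ a ∈ supp, Real.log ((k a).factorial : ℝ)
        ≤ U + (1/2 * Real.log (2*(k a : ℝ)) + ((k a : ℝ) * Real.log (k a) - (k a : ℝ))) := by
      intro a hma
      have hka : 1 ≤ k a := Nat.pos_of_ne_zero (by
        rw [hsuppdef] at hma
        exact (Finset.mem_filter.mp hma).2)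
      exact logfact_le (k a) hka
    calc ∑ a ∈ supp, Real.log ((k a).factorial : ℝ)
        ≤ ∑ a ∈ supp, (U + (1/2 * Real.log (2*(k a : ℝ))
            + ((k a : ℝ) * Real.log (k a) - (k a : ℝ)))) := Finset.sum_le_sum hb
      _ = s * U + (∑ a ∈ supp, (1/2 * Real.log (2*(k a : ℝ))))
          + (∑ a ∈ supp, ((k a : ℝ) * Real.log (k a))) - ∑ a ∈ supp, (k a : ℝ) := by
          rw [Finset.sum_add_distrib, Finset.sum_add_distrib, Finset.sum_sub_distrib,
            Finset.sum_const, nsmul_eq_mul]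
          ring
      _ = _ := by rw [hsupp_sum]
  have h2 : ∑ a ∈ supp, (1/2 * Real.log (2*(k a : ℝ))) ≤ s * (1/2 * Real.log (2*(n : ℝ))) := by
    calc ∑ a ∈ supp, (1/2 * Real.log (2*(k a : ℝ)))
        ≤ ∑ a ∈ supp, (1/2 * Real.log (2*(n : ℝ))) := by
          refine Finset.sum_le_sum fun a hma => ?_
          have hka : 1 ≤ k a := Nat.pos_of_ne_zero (by
            rw [hsuppdef] at hma
            exact (Finset.mem_filter.mp hma).2)
          have hkaR : (0:ℝ) < (k a : ℝ) := by exact_mod_cast hka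
          have hle : (2:ℝ)*(k a : ℝ) ≤ 2*(n : ℝ) := by
            have := hkle a
            have : ((k a : ℝ)) ≤ (n : ℝ) := by exact_mod_cast this
            linarith
          have := Real.log_le_log (by positivity) hle
          linarith
      _ = s * (1/2 * Real.log (2*(n : ℝ))) := by
          rw [Finset.sum_const, nsmul_eq_mul]
  have hlb : Real.log a₀ + (1/2 * Real.log (2*(n : ℝ)) + ((n : ℝ) * Real.log n - (n : ℝ)))
      ≤ Real.log (n.factorial : ℝ) := logfact_ge n hn a₀ ha₀ ha
  -- size of support
  have hsA : s ≤ (Fintype.card A : ℝ) := by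
    rw [hsdef]
    exact_mod_cast Finset.card_le_univ supp
  have hs0 : (0:ℝ) ≤ s := by positivity
  have hlog2 : (0:ℝ) ≤ Real.log 2 := Real.log_nonneg one_le_two
  have hmaxU : s * U ≤ (Fintype.card A : ℝ) * max U 0 :=
    calc s * U ≤ s * max U 0 := mul_le_mul_of_nonneg_left (le_max_left _ _) hs0
      _ ≤ (Fintype.card A : ℝ) * max U 0 :=
          mul_le_mul_of_nonneg_right hsA (le_max_right _ _)
  have hmax2 : (s - 1) * (1/2 * Real.log 2) ≤ (Fintype.card A : ℝ) * (1/2 * Real.log 2) := by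
    have hs1 : s - 1 ≤ (Fintype.card A : ℝ) := by linarith
    have : (0:ℝ) ≤ 1/2 * Real.log 2 := by linarith
    exact mul_le_mul_of_nonneg_right hs1 this
  have hlog2n : Real.log (2*(n : ℝ)) = Real.log 2 + Real.log n :=
    Real.log_mul two_ne_zero hn0.ne'
  -- final assembly
  have hfinal : -(Real.log (T.card : ℝ) + Real.log Q)
      ≤ (1 / 2) * (s - 1) * Real.log n
        + ((Fintype.card A : ℝ) * max U 0 + (Fintype.card A : ℝ) * (1/2 * Real.log 2)
          - Real.log a₀) := by
    rw [hlogD, hlogQ]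
    have step1 : -(Real.log (n.factorial : ℝ) - ∑ a ∈ supp, Real.log ((k a).factorial : ℝ)
          + ((∑ a ∈ supp, ((k a : ℝ) * Real.log (k a))) - (n : ℝ) * Real.log n))
        ≤ s * U + (∑ a ∈ supp, (1/2 * Real.log (2*(k a : ℝ))))
          - Real.log a₀ - 1/2 * Real.log (2*(n : ℝ)) := by
      linarith
    have step2 : s * U + (∑ a ∈ supp, (1/2 * Real.log (2*(k a : ℝ))))
          - Real.log a₀ - 1/2 * Real.log (2*(n : ℝ))
        ≤ s * U + s * (1/2 * Real.log (2*(n : ℝ)))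
          - Real.log a₀ - 1/2 * Real.log (2*(n : ℝ)) := by
      linarith
    have step3 : s * U + s * (1/2 * Real.log (2*(n : ℝ)))
          - Real.log a₀ - 1/2 * Real.log (2*(n : ℝ))
        = s * U + (s - 1) * (1/2 * Real.log 2) + (s - 1) * (1/2 * Real.log n)
          - Real.log a₀ := by
      rw [hlog2n]
      ring
    have step4 : s * U + (s - 1) * (1/2 * Real.log 2) + (s - 1) * (1/2 * Real.log n)
          - Real.log a₀
        ≤ (1 / 2) * (s - 1) * Real.log n
          + ((Fintype.card A : ℝ) * max U 0 + (Fintype.card A : ℝ) * (1/2 * Real.log 2)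
            - Real.log a₀) := by
      have : (s - 1) * (1/2 * Real.log n) = (1/2) * (s - 1) * Real.log n := by ring
      linarith [hmaxU, hmax2]
    linarith
  calc Real.log (S / (T.card : ℝ) / Phat) ≤ -(Real.log (T.card : ℝ) + Real.log Q) := hlog
    _ ≤ _ := hfinal
end

section
/- For the exponential-noise channel, let Xⁿ be uniform on the simplex {xⁿ ∈ ℝ₊ⁿ : ∑ xᵢ = nβ}, Yⁿ = Xⁿ + Nⁿ with Nⁿ i.i.d. exponential(1), and Y^{n⋆} i.i.d. exponential with mean 1+β. Then the log-likelihood ratio log(dP_{Yⁿ}/dP_{Y^{n⋆}})(yⁿ) is a function L(t,n) of t = ∑ᵢ yᵢ only, and sup_{n≥1, t} L(t, n) = β/(1+β) + log_e(1+β); in particular the log-likelihood ratio is uniformly bounded by a constant independent of n. -/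
/-- Erlang density with scale `a` and shape `n`: `t^{n−1} e^{−t/a} / (aⁿ (n−1)!)`. -/
noncomputable def erlangDens (a : ℝ) (n : ℕ) (t : ℝ) : ℝ :=
  t ^ (n - 1) * Real.exp (-t / a) / (a ^ n * (Nat.factorial (n - 1) : ℝ))

/-- `L(t,n) = nβ − (β/(1+β))t + n log(1+β) + (n−1) log(1 − nβ/t)` (natural logs). -/
noncomputable def Lfun (β t : ℝ) (n : ℕ) : ℝ :=
  n * β - (β / (1 + β)) * t + n * Real.log (1 + β)
    + ((n : ℝ) - 1) * Real.log (1 - n * β / t)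

/-- For the exponential-noise channel with `Xⁿ` uniform on `{xⁿ ≥ 0 : ∑ xᵢ = nβ}`,
`Yⁿ = Xⁿ + Nⁿ` (i.i.d. unit-mean exponential noise) and `Y^{n⋆}` i.i.d. exponential with mean
`1+β`: the log-likelihood ratio `log (dP_{Yⁿ}/dP_{Y^{n⋆}})(yⁿ)` is a function `L(t,n)` of
`t = ∑ᵢ yᵢ` only — namely the log-ratio of the shifted Erlang(1) density of `t` to the
Erlang(1+β) density of `t` — and `sup_{n ≥ 1, t > nβ} L(t,n) = β/(1+β) + log(1+β)`;
in particular the log-likelihood ratio is uniformly bounded by a constant independent of `n`. -/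
theorem stmt_18 (β : ℝ) (hβ : 0 < β) :
    (∀ n : ℕ, 1 ≤ n → ∀ t : ℝ, n * β < t →
      Real.log (erlangDens 1 n (t - n * β) / erlangDens (1 + β) n t) = Lfun β t n) ∧
    IsLUB {r : ℝ | ∃ n : ℕ, 1 ≤ n ∧ ∃ t : ℝ, n * β < t ∧ r = Lfun β t n}
      (β / (1 + β) + Real.log (1 + β)) := by
  have hc : (0:ℝ) < 1 + β := by linarith
  constructor
  · intro n hn t ht
    have hn1 : (1:ℝ) ≤ (n:ℝ) := by exact_mod_cast hn
    have hnb : 0 < (n:ℝ) * β := by nlinarith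
    have ht0 : 0 < t := lt_trans hnb ht
    have hx : 0 < t - (n:ℝ) * β := by linarith
    have hfac : (0:ℝ) < (Nat.factorial (n-1) : ℝ) := by
      exact_mod_cast Nat.factorial_pos (n-1)
    have hnum : 0 < erlangDens 1 n (t - n * β) := by
      unfold erlangDens
      apply div_pos (mul_pos (pow_pos hx _) (Real.exp_pos _))
      simp [hfac]
    have hden : 0 < erlangDens (1+β) n t := by
      unfold erlangDens
      exact div_pos (mul_pos (pow_pos ht0 _) (Real.exp_pos _))
        (mul_pos (pow_pos hc _) hfac)
    have hcast : ((n-1 : ℕ) : ℝ) = (n:ℝ) - 1 := by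
      have := Nat.cast_sub hn (R := ℝ); simpa using this
    have e1 : Real.log (1 - (n:ℝ) * β / t) = Real.log (t - (n:ℝ)*β) - Real.log t := by
      rw [show (1 - (n:ℝ)*β/t) = (t - (n:ℝ)*β)/t by field_simp,
        Real.log_div hx.ne' ht0.ne']
    rw [Real.log_div hnum.ne' hden.ne']
    unfold erlangDens Lfun
    rw [Real.log_div (by positivity) (by simp [hfac.ne']),
        Real.log_div (by positivity) (by positivity),
        Real.log_mul (pow_pos hx _).ne' (Real.exp_pos _).ne',
        Real.log_mul (pow_pos ht0 _).ne' (Real.exp_pos _).ne',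
        Real.log_mul (by norm_num : ((1:ℝ)^n) ≠ 0) hfac.ne',
        Real.log_mul (pow_pos hc _).ne' hfac.ne',
        Real.log_pow, Real.log_pow, Real.log_pow, Real.log_exp, Real.log_exp,
        Real.log_one, e1, hcast]
    rw [Real.log_pow]
    field_simp
    ring
  · constructor
    · rintro r ⟨n, hn, t, ht, rfl⟩
      have hn1 : (1:ℝ) ≤ (n:ℝ) := by exact_mod_cast hn
      have hnb : 0 < (n:ℝ) * β := by nlinarith
      have ht0 : 0 < t := lt_trans hnb ht
      have hx : 0 < 1 - (n:ℝ) * β / t := by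
        rw [sub_pos, div_lt_one ht0]; exact ht
      have hlog : Real.log (1+β) + Real.log (1 - (n:ℝ)*β/t)
          ≤ (1+β) * (1 - (n:ℝ)*β/t) - 1 := by
        have h := Real.log_le_sub_one_of_pos (mul_pos hc hx)
        rwa [Real.log_mul hc.ne' hx.ne'] at h
      have hmul : ((n:ℝ)-1) * (Real.log (1+β) + Real.log (1 - (n:ℝ)*β/t))
          ≤ ((n:ℝ)-1) * ((1+β) * (1 - (n:ℝ)*β/t) - 1) :=
        mul_le_mul_of_nonneg_left hlog (by linarith)
      have hQ : 0 ≤ t^2 - ((2*(n:ℝ)-1)*(1+β) - 1)*t + (n:ℝ)*((n:ℝ)-1)*(1+β)^2 := by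
        nlinarith [sq_nonneg (t - (n:ℝ)*β - ((n:ℝ)-1)),
          mul_nonneg hβ.le (sub_nonneg.mpr ht.le), sq_nonneg ((n:ℝ)-1)]
      have hid : β/(1+β) - ((n:ℝ)*β - (β/(1+β))*t + ((n:ℝ)-1)*((1+β)*(1 - (n:ℝ)*β/t)-1))
          = β * (t^2 - ((2*(n:ℝ)-1)*(1+β) - 1)*t + (n:ℝ)*((n:ℝ)-1)*(1+β)^2) / (t*(1+β)) := by
        field_simp
        ring
      have hpos : 0 ≤ β * (t^2 - ((2*(n:ℝ)-1)*(1+β) - 1)*t + (n:ℝ)*((n:ℝ)-1)*(1+β)^2) / (t*(1+β)) :=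
        div_nonneg (mul_nonneg hβ.le hQ) (by positivity)
      have key : (n:ℝ)*β - (β/(1+β))*t + ((n:ℝ)-1)*((1+β)*(1 - (n:ℝ)*β/t)-1) ≤ β/(1+β) := by
        linarith [hid ▸ hpos]
      unfold Lfun
      nlinarith [hmul, key]
    · intro b hb
      by_contra hlt
      push_neg at hlt
      set T : ℝ := β / (1+β) + Real.log (1+β) with hT
      set ε : ℝ := T - b with hε
      have hε0 : 0 < ε := by simp [hε]; linarith
      set t : ℝ := β + ε*(1+β)/(2*β) with htdef
      have htβ : β < t := by
        have : 0 < ε*(1+β)/(2*β) := by positivity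
        simp [htdef]; linarith
      have hmem : Lfun β t 1 ∈ {r : ℝ | ∃ n : ℕ, 1 ≤ n ∧ ∃ t : ℝ, n * β < t ∧ r = Lfun β t n} :=
        ⟨1, le_refl 1, t, by simpa using htβ, rfl⟩
      have hle := hb hmem
      have hval : Lfun β t 1 = T - ε/2 := by
        unfold Lfun
        simp only [Nat.cast_one, one_mul, sub_self, zero_mul, add_zero, hT, htdef]
        field_simp
        ring
      rw [hval] at hle
      clear_value t ε T
      linarith
end

section
/- Let W_i(z), i = 1,…,n, be independent real random variables parameterized by z in a metric space D, with D_n(z) = (1/n)∑ E[W_i(z)], V_n(z) = (1/n)∑ Var(W_i(z)), T_n(z) = (1/n)∑ E|W_i(z) − E W_i(z)|³. Suppose there exist z⋆ ∈ D, sequences D_n⋆, and constants ℓ₁, ℓ₂, ℓ₃, F₁, F₂, T_max > 0 such that for all z: D_n⋆ − D_n(z) ≥ ℓ₁ d²(z,z⋆) − (ℓ₂/√n) d(z,z⋆) − ℓ₃/n, V_n(z) ≤ F₁ d(z,z⋆) + F₂/√n (i.e., V_n⋆ = 0), and T_n(z) ≤ T_max. Then for any 0 ≤ b ≤ 1/6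 and any A > 0 there exists K ≥ 0 such that for all Δ > A/n^{1/2 + b} and all sufficiently large n: min_{z∈D} P[∑ᵢ W_i(z) ≤ n(D_n⋆ + Δ)] ≥ 1 − (K/A^{3/2}) · n^{−(1/4 − 3b/2)}. -/
open MeasureTheory ProbabilityTheory
open scoped BigOperators

private lemma aux_amgm (l1 l2 s ζ : ℝ) (hl1 : 0 < l1) :
    s * l2 * ζ ≤ s * s * l1 * ζ ^ 2 / 2 + l2 ^ 2 / l1 / 2 := by
  rw [← sub_nonneg]
  have h : s * s * l1 * ζ ^ 2 / 2 + l2 ^ 2 / l1 / 2 - s * l2 * ζ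
      = (l1 * s * ζ - l2) ^ 2 / (2 * l1) := by
    field_simp
    ring
  rw [h]
  positivity

private lemma aux_sq (x y : ℝ) : 4 * (x * y) ≤ (x + y) ^ 2 := by nlinarith [sq_nonneg (x - y)]

set_option maxHeartbeats 3200000 in
/-- Theorem 3.4 (degenerate-variance case `V_n⋆ = 0`): let `W_i(z)`, `i = 1,…,n`, be independent
random variables parameterized by `z` in a metric space `D`, with mean dominance
`D_n⋆ − D_n(z) ≥ ℓ₁ d²(z,z⋆) − (ℓ₂/√n) d(z,z⋆) − ℓ₃/n`, variance bound
`V_n(z) ≤ F₁ d(z,z⋆) + F₂/√n` and third moments `T_n(z) ≤ T_max`. Then for any `0 ≤ b ≤ 1/6`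
and `A > 0` there is `K ≥ 0` such that for all sufficiently large `n`, all
`Δ > A/n^{1/2+b}` and all `z`,
`P[∑ᵢ W_i(z) ≤ n(D_n⋆ + Δ)] ≥ 1 − (K/A^{3/2}) n^{−(1/4 − 3b/2)}`. -/
theorem stmt_19 {D : Type*} [MetricSpace D] [Nonempty D]
    {Ω : Type*} [MeasurableSpace Ω] (μ : Measure Ω) [IsProbabilityMeasure μ]
    (W : (n : ℕ) → D → Fin n → Ω → ℝ)
    (hmeas : ∀ n z i, Measurable (W n z i))
    (hindep : ∀ n z, iIndepFun (W n z) μ)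
    (hL2 : ∀ n z i, MemLp (W n z i) 2 μ)
    (hmom3 : ∀ n z i, Integrable (fun ω => |W n z i ω - ∫ ω', W n z i ω' ∂μ| ^ 3) μ)
    (Dn Vn Tn : ℕ → D → ℝ)
    (hDn : ∀ n z, Dn n z = (1 / n : ℝ) * ∑ i, ∫ ω, W n z i ω ∂μ)
    (hVn : ∀ n z, Vn n z = (1 / n : ℝ) * ∑ i, variance (W n z i) μ)
    (hTn : ∀ n z, Tn n z = (1 / n : ℝ) * ∑ i, ∫ ω, |W n z i ω - ∫ ω', W n z i ω' ∂μ| ^ 3 ∂μ)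
    (zstar : D) (Dstar : ℕ → ℝ)
    (l1 l2 l3 F1 F2 Tmax : ℝ)
    (hl1 : 0 < l1) (hl2 : 0 < l2) (hl3 : 0 < l3)
    (hF1 : 0 < F1) (hF2 : 0 < F2) (hTmax : 0 < Tmax)
    (hmean : ∀ n z, Dstar n - Dn n z
      ≥ l1 * dist z zstar ^ 2 - (l2 / Real.sqrt n) * dist z zstar - l3 / n)
    (hvar : ∀ n z, Vn n z ≤ F1 * dist z zstar + F2 / Real.sqrt n)
    (hthird : ∀ n z, Tn n z ≤ Tmax)
    (b : ℝ) (hb0 : 0 ≤ b) (hb6 : b ≤ 1 / 6) (A : ℝ) (hA : 0 < A) :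
    ∃ K : ℝ, 0 ≤ K ∧ ∃ N : ℕ, ∀ n : ℕ, N ≤ n →
      ∀ Δ : ℝ, A / (n : ℝ) ^ ((1 : ℝ) / 2 + b) < Δ →
        ∀ z : D,
          (μ {ω | (∑ i, W n z i ω) ≤ n * (Dstar n + Δ)}).toReal
            ≥ 1 - (K / A ^ ((3 : ℝ) / 2)) * (1 / (n : ℝ) ^ ((1 : ℝ) / 4 - 3 * b / 2)) := by
  classical
  have hl1' : (0:ℝ) < 1 + 1 / l1 := by positivity
  set C1 : ℝ := 4 * F1 * (1 + 1 / l1) with hC1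
  have hC1pos : 0 < C1 := by positivity
  set K : ℝ := C1 + 4 * F2 / A ^ ((1:ℝ)/2) with hKdef
  have hA12 : (0:ℝ) < A ^ ((1:ℝ)/2) := Real.rpow_pos_of_pos hA _
  have hA32 : (0:ℝ) < A ^ ((3:ℝ)/2) := Real.rpow_pos_of_pos hA _
  have hKpos : 0 < K := by positivity
  set B : ℝ := l2 ^ 2 / l1 + 2 * l3 with hBdef
  have hBpos : 0 < B := by positivity
  set c0 : ℝ := max 1 (B / A) with hc0
  have hc01 : (1:ℝ) ≤ c0 := le_max_left _ _
  have hc0B : B / A ≤ c0 := le_max_right _ _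
  refine ⟨K, hKpos.le, ⌈c0 ^ 3⌉₊ + 1, ?_⟩
  intro n hn Δ hΔ z
  clear_value C1 K B c0
  -- basic facts about n
  have hnR : c0 ^ 3 ≤ (n:ℝ) := by
    calc c0 ^ 3 ≤ (⌈c0 ^ 3⌉₊ : ℝ) := Nat.le_ceil _
      _ ≤ (n:ℝ) := by exact_mod_cast le_trans (Nat.le_succ _) hn
  have hn1 : (1:ℝ) ≤ (n:ℝ) := by
    have h1 : (1:ℝ) ^ 3 ≤ c0 ^ 3 := pow_le_pow_left₀ (by norm_num) hc01 3
    rw [one_pow] at h1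
    linarith only [h1, hnR]
  have hnpos : (0:ℝ) < (n:ℝ) := lt_of_lt_of_le one_pos hn1
  have hn13 : B / A ≤ (n:ℝ) ^ ((1:ℝ)/3) := by
    have h1 : (c0 ^ 3 : ℝ) ^ ((1:ℝ)/3) ≤ (n:ℝ) ^ ((1:ℝ)/3) :=
      Real.rpow_le_rpow (by positivity) hnR (by norm_num)
    have h2 : (c0 ^ 3 : ℝ) ^ ((1:ℝ)/3) = c0 := by
      rw [← Real.rpow_natCast c0 3, ← Real.rpow_mul (by linarith only [hc01] : (0:ℝ) ≤ c0)]
      norm_num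
    rw [h2] at h1
    exact le_trans hc0B h1
  have hn12b : (n:ℝ) ^ ((1:ℝ)/3) ≤ (n:ℝ) ^ ((1:ℝ)/2 - b) :=
    Real.rpow_le_rpow_of_exponent_le hn1 (by linarith only [hb6])
  have hp12b : (0:ℝ) < (n:ℝ) ^ ((1:ℝ)/2 + b) := Real.rpow_pos_of_pos hnpos _
  have hmulpow : (n:ℝ) ^ ((1:ℝ)/2 - b) * (n:ℝ) ^ ((1:ℝ)/2 + b) = (n:ℝ) := by
    rw [← Real.rpow_add hnpos]
    norm_num
  have hΔpos : 0 < Δ := lt_trans (by positivity) hΔ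
  have hnΔ : A * (n:ℝ) ^ ((1:ℝ)/2 - b) < (n:ℝ) * Δ := by
    have h := (div_lt_iff₀ hp12b).mp hΔ
    calc A * (n:ℝ) ^ ((1:ℝ)/2 - b)
        < Δ * (n:ℝ) ^ ((1:ℝ)/2 + b) * (n:ℝ) ^ ((1:ℝ)/2 - b) := by
          exact mul_lt_mul_of_pos_right h (Real.rpow_pos_of_pos hnpos _)
      _ = (n:ℝ) * Δ := by
          rw [mul_assoc, mul_comm ((n:ℝ) ^ ((1:ℝ)/2 + b)) ((n:ℝ) ^ ((1:ℝ)/2 - b)), hmulpow]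
          ring
  have hBnΔ : B < (n:ℝ) * Δ := by
    have h1 : B ≤ A * (n:ℝ) ^ ((1:ℝ)/2 - b) := by
      have := mul_le_mul_of_nonneg_left (le_trans hn13 hn12b) hA.le
      calc B = A * (B / A) := by field_simp
        _ ≤ A * (n:ℝ) ^ ((1:ℝ)/2 - b) := this
    exact lt_of_le_of_lt h1 hnΔ
  -- square root facts
  set s : ℝ := Real.sqrt n with hs
  have hsn : 0 < s := Real.sqrt_pos.mpr hnpos
  have hsn2 : s * s = (n:ℝ) := Real.mul_self_sqrt hnpos.le
  set ζ : ℝ := dist z zstar with hzeta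
  have hζ : 0 ≤ ζ := dist_nonneg
  clear_value s ζ
  -- the sum and its moments
  set S : Ω → ℝ := fun ω => ∑ i, W n z i ω with hS
  have hSmem : MemLp S 2 μ := memLp_finset_sum _ (fun i _ => hL2 n z i)
  have hES : ∫ ω, S ω ∂μ = (n:ℝ) * Dn n z := by
    rw [hS]
    rw [integral_finset_sum _ (fun i _ => (hL2 n z i).integrable one_le_two), hDn n z]
    field_simp
  have hvS : variance S μ = (n:ℝ) * Vn n z := by
    have hfun : S = ∑ i, W n z i := by
      funext ω; simp [hS, Finset.sum_apply]
    rw [hfun, IndepFun.variance_sum (fun i _ => hL2 n z i)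
      (fun i _ j _ hij => (hindep n z).indepFun hij), hVn n z]
    field_simp
  -- deviation threshold
  set c : ℝ := (n:ℝ) * (Dstar n + Δ) - (n:ℝ) * Dn n z with hc
  clear_value c
  have hmean' := hmean n z
  rw [← hzeta, ← hs] at hmean'
  have hclow : (n:ℝ) * Δ / 2 + (n:ℝ) * l1 * ζ ^ 2 / 2 ≤ c := by
    have h1 : (n:ℝ) * (l1 * ζ ^ 2 - (l2 / s) * ζ - l3 / (n:ℝ)) ≤ (n:ℝ) * (Dstar n - Dn n z) :=
      mul_le_mul_of_nonneg_left hmean' hnpos.le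
    have h2 : (n:ℝ) * (l1 * ζ ^ 2 - (l2 / s) * ζ - l3 / (n:ℝ))
        = (n:ℝ) * l1 * ζ ^ 2 - s * l2 * ζ - l3 := by
      rw [← hsn2]
      field_simp
    rw [h2] at h1
    have hslζ : s * l2 * ζ ≤ (n:ℝ) * l1 * ζ ^ 2 / 2 + l2 ^ 2 / l1 / 2 := by
      have h := aux_amgm l1 l2 s ζ hl1
      rw [hsn2] at h
      exact h
    have hceq : c = (n:ℝ) * Δ + (n:ℝ) * (Dstar n - Dn n z) := by rw [hc]; ring
    linarith only [h1, hslζ, hBnΔ, hBdef, hceq]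
  have hcpos : 0 < c := by
    have h1 : 0 < (n:ℝ) * Δ / 2 := by positivity
    have h2 : 0 ≤ (n:ℝ) * l1 * ζ ^ 2 / 2 := by positivity
    linarith only [h1, h2, hclow]
  -- Chebyshev
  have cheb := meas_ge_le_variance_div_sq (μ := μ) hSmem hcpos
  have hsub : {ω | S ω ≤ (n:ℝ) * (Dstar n + Δ)}ᶜ ⊆ {ω | c ≤ |S ω - μ[S]|} := by
    intro ω hω
    simp only [Set.mem_compl_iff, Set.mem_setOf_eq, not_le] at hω ⊢
    have hmu : μ[S] = (n:ℝ) * Dn n z := hES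
    rw [hmu]
    have : c ≤ S ω - (n:ℝ) * Dn n z := by rw [hc]; linarith only [hω]
    exact this.trans (le_abs_self _)
  have hmeasS : MeasurableSet {ω | S ω ≤ (n:ℝ) * (Dstar n + Δ)} :=
    measurableSet_le (Finset.measurable_sum _ fun i _ => hmeas n z i) measurable_const
  set v : ℝ := variance S μ / c ^ 2 with hv
  have hv0 : 0 ≤ v := div_nonneg (variance_nonneg _ _) (by positivity)
  have hcompl : μ ({ω | S ω ≤ (n:ℝ) * (Dstar n + Δ)}ᶜ) ≤ ENNReal.ofReal v :=
    le_trans (measure_mono hsub) cheb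
  have hsum1 : (μ {ω | S ω ≤ (n:ℝ) * (Dstar n + Δ)}).toReal
      + (μ ({ω | S ω ≤ (n:ℝ) * (Dstar n + Δ)}ᶜ)).toReal = 1 := by
    rw [← ENNReal.toReal_add (measure_ne_top _ _) (measure_ne_top _ _),
      measure_add_measure_compl hmeasS]
    simp
  have hcompl' : (μ ({ω | S ω ≤ (n:ℝ) * (Dstar n + Δ)}ᶜ)).toReal ≤ v := by
    have := ENNReal.toReal_mono (by simp) hcompl
    simpa [ENNReal.toReal_ofReal hv0] using this
  clear_value v
  -- now the numeric bound: v ≤ (K / A^{3/2}) * (1/p)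
  set p : ℝ := (n:ℝ) ^ ((1:ℝ)/4 - 3 * b / 2) with hp
  have hppos : 0 < p := Real.rpow_pos_of_pos hnpos _
  clear_value p
  have hvar' := hvar n z
  rw [← hzeta, ← hs] at hvar'
  have hVbound : variance S μ ≤ (n:ℝ) * F1 * ζ + s * F2 := by
    rw [hvS]
    have h1 : Vn n z ≤ F1 * ζ + F2 / s := hvar'
    have h2 : (n:ℝ) * (F1 * ζ + F2 / s) = (n:ℝ) * F1 * ζ + s * F2 := by
      rw [← hsn2]
      field_simp
    calc (n:ℝ) * Vn n z ≤ (n:ℝ) * (F1 * ζ + F2 / s) := mul_le_mul_of_nonneg_left h1 hnpos.le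
      _ = (n:ℝ) * F1 * ζ + s * F2 := h2
  -- key: A^{3/2} * p ≤ n * Δ * √Δ
  set q : ℝ := Real.sqrt Δ with hq
  have hqpos : 0 < q := Real.sqrt_pos.mpr hΔpos
  have hq2 : q ^ 2 = Δ := Real.sq_sqrt hΔpos.le
  clear_value q
  have hkey : A ^ ((3:ℝ)/2) * p ≤ (n:ℝ) * Δ * q := by
    have hΔ0 : A * (n:ℝ) ^ (-((1:ℝ)/2 + b)) ≤ Δ := by
      have : A / (n:ℝ) ^ ((1:ℝ)/2 + b) = A * (n:ℝ) ^ (-((1:ℝ)/2 + b)) := by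
        rw [Real.rpow_neg hnpos.le]; ring
      linarith only [hΔ, le_of_eq this.symm]
    have hqlow : A ^ ((1:ℝ)/2) * (n:ℝ) ^ (-((1:ℝ)/4 + b / 2)) ≤ q := by
      have h1 : Real.sqrt (A * (n:ℝ) ^ (-((1:ℝ)/2 + b))) ≤ q := by
        rw [hq]
        exact Real.sqrt_le_sqrt hΔ0
      have h2 : Real.sqrt (A * (n:ℝ) ^ (-((1:ℝ)/2 + b)))
          = A ^ ((1:ℝ)/2) * (n:ℝ) ^ (-((1:ℝ)/4 + b / 2)) := by
        rw [Real.sqrt_eq_rpow, Real.mul_rpow hA.le (Real.rpow_nonneg hnpos.le _),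
          ← Real.rpow_mul hnpos.le]
        ring_nf
      rw [h2] at h1; exact h1
    have hnn : (n:ℝ) * ((n:ℝ) ^ (-((1:ℝ)/2 + b)) * (n:ℝ) ^ (-((1:ℝ)/4 + b/2))) = p := by
      rw [← Real.rpow_add hnpos]
      nth_rewrite 1 [← Real.rpow_one (n:ℝ)]
      rw [← Real.rpow_add hnpos, hp]
      congr 1
      ring
    calc A ^ ((3:ℝ)/2) * p
        = ((n:ℝ) * (A * (n:ℝ) ^ (-((1:ℝ)/2 + b)))) * (A ^ ((1:ℝ)/2) * (n:ℝ) ^ (-((1:ℝ)/4 + b/2))) := by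
          rw [show ((3:ℝ)/2) = 1 + (1:ℝ)/2 by norm_num, Real.rpow_add hA, Real.rpow_one, ← hnn]
          ring
      _ ≤ (n:ℝ) * Δ * q := by
          apply mul_le_mul
          · exact mul_le_mul_of_nonneg_left hΔ0 hnpos.le
          · exact hqlow
          · positivity
          · positivity
  -- lower bound for c by n*Δ/2 alone
  have hclow' : (n:ℝ) * Δ / 2 ≤ c := by
    have h2 : 0 ≤ (n:ℝ) * l1 * ζ ^ 2 / 2 := by positivity
    linarith only [h2, hclow]
  have hc2pos : (0:ℝ) < c ^ 2 := pow_pos hcpos 2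
  have hinvp : (n:ℝ) ^ (3 * b / 2 - 1/4) = 1 / p := by
    rw [hp, one_div ((n:ℝ) ^ ((1:ℝ)/4 - 3 * b / 2)), ← Real.rpow_neg hnpos.le]
    congr 1
    ring
  -- part B : the F2 term
  set r : ℝ := (n:ℝ) ^ ((1:ℝ)/2 - b) with hr
  have hrpos : 0 < r := Real.rpow_pos_of_pos hnpos _
  have hr2 : r * r = (n:ℝ) ^ (1 - 2*b) := by
    rw [hr, ← Real.rpow_add hnpos]
    congr 1
    ring
  clear_value r
  have hpartB : s * F2 / c ^ 2 ≤ 4 * F2 / A ^ 2 * (1 / p) := by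
    have hcAr : A * r / 2 ≤ c := by linarith only [hnΔ, hclow']
    have hArpos : 0 < A * r / 2 := by positivity
    have hc2 : (A * r / 2) ^ 2 ≤ c ^ 2 := pow_le_pow_left₀ hArpos.le hcAr 2
    have step1 : s * F2 / c ^ 2 ≤ s * F2 / ((A * r / 2) ^ 2) :=
      div_le_div_of_nonneg_left (mul_nonneg hsn.le hF2.le) (pow_pos hArpos 2) hc2
    have hsr : s / (r * r) = (n:ℝ) ^ (2 * b - 1/2) := by
      rw [hr2, hs, Real.sqrt_eq_rpow, ← Real.rpow_sub hnpos]
      congr 1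
      ring
    have step2 : s * F2 / ((A * r / 2) ^ 2) = 4 * F2 / A ^ 2 * (s / (r * r)) := by
      field_simp
      ring
    have step3 : (n:ℝ) ^ (2 * b - 1/2) ≤ (n:ℝ) ^ (3 * b / 2 - 1/4) :=
      Real.rpow_le_rpow_of_exponent_le hn1 (by linarith only [hb6, hb0])
    have step4 : 4 * F2 / A ^ 2 * ((n:ℝ) ^ (2 * b - 1/2)) ≤ 4 * F2 / A ^ 2 * ((n:ℝ) ^ (3 * b / 2 - 1/4)) :=
      mul_le_mul_of_nonneg_left step3 (by positivity)
    calc s * F2 / c ^ 2 ≤ s * F2 / ((A * r / 2) ^ 2) := step1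
      _ = 4 * F2 / A ^ 2 * (s / (r * r)) := step2
      _ = 4 * F2 / A ^ 2 * ((n:ℝ) ^ (2 * b - 1/2)) := by rw [hsr]
      _ ≤ 4 * F2 / A ^ 2 * ((n:ℝ) ^ (3 * b / 2 - 1/4)) := step4
      _ = 4 * F2 / A ^ 2 * (1 / p) := by rw [hinvp]
  -- part A : the F1 term
  have hA32p : (0:ℝ) < A ^ ((3:ℝ)/2) * p := mul_pos hA32 hppos
  have hC1div : C1 / A ^ ((3:ℝ)/2) * (1 / p) = C1 / (A ^ ((3:ℝ)/2) * p) := by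
    field_simp
  have hpartA : (n:ℝ) * F1 * ζ / c ^ 2 ≤ C1 / A ^ ((3:ℝ)/2) * (1 / p) := by
    rw [hC1div, div_le_div_iff₀ hc2pos hA32p]
    -- goal : n*F1*ζ * (A^{3/2} * p) ≤ C1 * c^2
    have hnF1ζ : 0 ≤ (n:ℝ) * F1 * ζ := mul_nonneg (mul_nonneg hnpos.le hF1.le) hζ
    have hm : (n:ℝ) * F1 * ζ * (A ^ ((3:ℝ)/2) * p) ≤ (n:ℝ) * F1 * ζ * ((n:ℝ) * Δ * q) :=
      mul_le_mul_of_nonneg_left hkey hnF1ζ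
    rcases le_or_gt ζ q with hcase | hcase
    · -- small ζ : use c ≥ nΔ/2
      have hc2 : ((n:ℝ) * Δ / 2) ^ 2 ≤ c ^ 2 := pow_le_pow_left₀ (by positivity) hclow' 2
      have e1 : (n:ℝ) * F1 * ζ * ((n:ℝ) * Δ * q) ≤ (n:ℝ) * F1 * q * ((n:ℝ) * Δ * q) :=
        mul_le_mul_of_nonneg_right (mul_le_mul_of_nonneg_left hcase (mul_nonneg hnpos.le hF1.le))
          (by positivity)
      have e2 : (n:ℝ) * F1 * q * ((n:ℝ) * Δ * q) = F1 * ((n:ℝ) * Δ) ^ 2 := by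
        rw [← hq2]
        ring
      have e3 : 4 * F1 * (((n:ℝ) * Δ / 2) ^ 2) ≤ 4 * F1 * c ^ 2 :=
        mul_le_mul_of_nonneg_left hc2 (by positivity)
      have e4 : 4 * F1 * (((n:ℝ) * Δ / 2) ^ 2) = F1 * ((n:ℝ) * Δ) ^ 2 := by ring
      have e5 : 4 * F1 * c ^ 2 ≤ C1 * c ^ 2 := by
        apply mul_le_mul_of_nonneg_right _ (sq_nonneg c)
        have h1 : 0 < 4 * F1 * (1 / l1) := by positivity
        have h2 : C1 = 4 * F1 + 4 * F1 * (1 / l1) := by rw [hC1]; ring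
        linarith only [h1, h2]
      linarith only [hm, e1, e2, e3, e4, e5]
    · -- large ζ : use c² ≥ n²Δl1ζ²
      have hζpos : 0 < ζ := lt_trans hqpos hcase
      have hxy := aux_sq ((n:ℝ) * Δ / 2) ((n:ℝ) * l1 * ζ ^ 2 / 2)
      have hxyc : ((n:ℝ) * Δ / 2 + (n:ℝ) * l1 * ζ ^ 2 / 2) ^ 2 ≤ c ^ 2 :=
        pow_le_pow_left₀ (by positivity) hclow 2
      have hxye : 4 * (((n:ℝ) * Δ / 2) * ((n:ℝ) * l1 * ζ ^ 2 / 2)) = (n:ℝ) ^ 2 * Δ * l1 * ζ ^ 2 := by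
        ring
      have hc2' : (n:ℝ) ^ 2 * Δ * l1 * ζ ^ 2 ≤ c ^ 2 := by
        linarith only [hxy, hxyc, hxye]
      have e1 : (n:ℝ) * F1 * ζ * ((n:ℝ) * Δ * q) ≤ (n:ℝ) * F1 * ζ * ((n:ℝ) * Δ * ζ) :=
        mul_le_mul_of_nonneg_left
          (mul_le_mul_of_nonneg_left hcase.le (mul_nonneg hnpos.le hΔpos.le)) hnF1ζ
      have e2 : (n:ℝ) * F1 * ζ * ((n:ℝ) * Δ * ζ) = F1 * ((n:ℝ) ^ 2 * Δ * ζ ^ 2) := by ring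
      have hC1l1 : C1 * l1 = 4 * F1 * l1 + 4 * F1 := by
        rw [hC1]
        field_simp
      have ht : 0 ≤ (n:ℝ) ^ 2 * Δ * ζ ^ 2 := by positivity
      have hF1C1 : F1 ≤ C1 * l1 := by linarith only [mul_pos hF1 hl1, hC1l1, hF1]
      have e3 : F1 * ((n:ℝ) ^ 2 * Δ * ζ ^ 2) ≤ C1 * l1 * ((n:ℝ) ^ 2 * Δ * ζ ^ 2) :=
        mul_le_mul_of_nonneg_right hF1C1 ht
      have e4 : C1 * l1 * ((n:ℝ) ^ 2 * Δ * ζ ^ 2) = C1 * ((n:ℝ) ^ 2 * Δ * l1 * ζ ^ 2) := by ring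
      have e5 : C1 * ((n:ℝ) ^ 2 * Δ * l1 * ζ ^ 2) ≤ C1 * c ^ 2 :=
        mul_le_mul_of_nonneg_left hc2' hC1pos.le
      linarith only [hm, e1, e2, e3, e4, e5]
  -- combine
  have hvle : v ≤ C1 / A ^ ((3:ℝ)/2) * (1 / p) + 4 * F2 / A ^ 2 * (1 / p) := by
    have h1 : v ≤ ((n:ℝ) * F1 * ζ + s * F2) / c ^ 2 := by
      rw [hv]
      exact (div_le_div_iff_of_pos_right hc2pos).mpr hVbound
    have h2 : ((n:ℝ) * F1 * ζ + s * F2) / c ^ 2 = (n:ℝ) * F1 * ζ / c ^ 2 + s * F2 / c ^ 2 :=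
      add_div _ _ _
    linarith only [h1, h2, hpartA, hpartB]
  have hAA : A ^ ((1:ℝ)/2) * A ^ ((3:ℝ)/2) = A ^ 2 := by
    rw [← Real.rpow_add hA, show (1:ℝ)/2 + 3/2 = ((2:ℕ):ℝ) by norm_num, Real.rpow_natCast]
  have hRHS : K / A ^ ((3:ℝ)/2) * (1 / p)
      = C1 / A ^ ((3:ℝ)/2) * (1 / p) + 4 * F2 / A ^ 2 * (1 / p) := by
    have h : K / A ^ ((3:ℝ)/2) = C1 / A ^ ((3:ℝ)/2) + 4 * F2 / A ^ 2 := by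
      rw [hKdef, ← hAA]
      field_simp
    rw [h]
    ring
  -- conclude
  have hfinal : (μ {ω | S ω ≤ (n:ℝ) * (Dstar n + Δ)}).toReal
      ≥ 1 - K / A ^ ((3:ℝ)/2) * (1 / p) := by
    rw [hRHS]
    linarith only [hsum1, hcompl', hvle]
  exact hfinal
end
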